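/- arXiv:1310.3646 — 2 statements merged into one kernel-verified Lean document; each statement's English description precedes it below -/
import Mathlib

section
/- Let y_m ∈ D([0,T], S_m), m ≥ 1, be a sequence of càdlàg step trajectories such that R_m y_{m+1} = y_m for all m ≥ 1. Then there exists a trajectory y in E([0,T], S_d) such that R_m y = y_m for all m ≥ 1; y is the pointwise limit of the nondecreasing sequence y_m. -/
open Filter Topology Set

noncomputable section
namespace Soft

abbrev Sd := ℕ∞

noncomputable def sval (k : Sd) : ℝ := if k = ⊤ then 0 else 1 / ((k.toNat : ℝ) + 1)

noncomputable def sdist (k j : Sd) : ℝ := |sval k - sval j|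

/-- left-limit filter within `[0,T]` -/
def lf (T t : ℝ) : Filter ℝ := 𝓝[Set.Icc 0 T ∩ Set.Iio t] t

/-- right-limit filter within `[0,T]` -/
def rf (T t : ℝ) : Filter ℝ := 𝓝[Set.Icc 0 T ∩ Set.Ioi t] t

def leftLim (T : ℝ) (x : ℝ → Sd) (t : ℝ) (L : Sd) : Prop := Tendsto x (lf T t) (𝓝 L)

def rightLim (T : ℝ) (x : ℝ → Sd) (t : ℝ) (L : Sd) : Prop := Tendsto x (rf T t) (𝓝 L)

/-- the set of cluster points of `x(s)`, `s ↑ t`, is exactly the pair `{n, ∞}` -/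
def softLeftPair (T : ℝ) (x : ℝ → Sd) (t : ℝ) (n : ℕ) : Prop :=
  {L : Sd | MapClusterPt L (lf T t) x} = {(n : Sd), ⊤}

def softRightPair (T : ℝ) (x : ℝ → Sd) (t : ℝ) (n : ℕ) : Prop :=
  {L : Sd | MapClusterPt L (rf T t) x} = {(n : Sd), ⊤}

/-- `x` has a soft left-limit at `t` -/
def softLeftLim (T : ℝ) (x : ℝ → Sd) (t : ℝ) : Prop :=
  (∃ L, leftLim T x t L) ∨ ∃ n : ℕ, softLeftPair T x t n

/-- `x` is soft right-continuous at `t` -/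
def softRightCont (T : ℝ) (x : ℝ → Sd) (t : ℝ) : Prop :=
  rightLim T x t ⊤ ∨ (∃ n : ℕ, rightLim T x t (n : Sd) ∧ x t = (n : Sd)) ∨
    ∃ n : ℕ, softRightPair T x t n ∧ x t = (n : Sd)

/-- the space `𝔼([0,T], S_d)` of soft right-continuous trajectories with soft left-limits -/
def memBbE (T : ℝ) (x : ℝ → Sd) : Prop :=
  (∀ t ∈ Set.Icc 0 T, softRightCont T x t) ∧ ∀ t ∈ Set.Ioc 0 T, softLeftLim T x t

/-- time of last visit before `t` to the set `{k : P k}` (with the convention `= 0`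
if there is no such visit, since `sSup ∅ = 0` in `ℝ`) -/
def lastVisit (P : Sd → Prop) (x : ℝ → Sd) (t : ℝ) : ℝ :=
  sSup {s | s ∈ Set.Icc 0 t ∧ P (x s)}

open Classical in
/-- the record operator: the last value in `{k : P k}` visited by `x` before time `t`;
equal to the bottom state `0` before the first visit -/
noncomputable def srec (T : ℝ) (P : Sd → Prop) (x : ℝ → Sd) (t : ℝ) : Sd :=
  if ∃ s ∈ Set.Icc 0 t, P (x s) then
    if P (x (lastVisit P x t)) then x (lastVisit P x t)
    else if h : ∃ L, leftLim T x (lastVisit P x t) L then h.choose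
    else if h2 : ∃ n : ℕ, softLeftPair T x (lastVisit P x t) n then (h2.choose : Sd)
    else 0
  else 0

/-- `R_m`, the operator recording the last site visited in `S_m = {0,…,m}` -/
noncomputable def Rm (T : ℝ) (m : ℕ) (x : ℝ → Sd) : ℝ → Sd :=
  srec T (fun k => k ≤ (m : Sd)) x

/-- `R_∞`, the operator recording the last site visited in `ℕ` -/
noncomputable def Rinf (T : ℝ) (x : ℝ → Sd) : ℝ → Sd := srec T (fun k => k ≠ ⊤) x

/-- `σ_∞(t)`, the time of the last visit to `ℕ` before `t` -/
def sigmaInf (x : ℝ → Sd) (t : ℝ) : ℝ := lastVisit (fun k => k ≠ ⊤) x t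

/-- `D([0,T], S_m)`: càdlàg trajectories with values in `S_m = {0,…,m}` -/
def memD (T : ℝ) (m : ℕ) (x : ℝ → Sd) : Prop :=
  (∀ t ∈ Set.Icc 0 T, x t ≤ (m : Sd)) ∧
  (∀ t ∈ Set.Ico 0 T, rightLim T x t (x t)) ∧
  ∀ t ∈ Set.Ioc 0 T, ∃ L, leftLim T x t L

/-- `D([0,T], S_d)`: càdlàg trajectories with values in `S_d` -/
def memDd (T : ℝ) (x : ℝ → Sd) : Prop :=
  (∀ t ∈ Set.Ico 0 T, rightLim T x t (x t)) ∧
  ∀ t ∈ Set.Ioc 0 T, ∃ L, leftLim T x t L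

/-- the space `E([0,T], S_d)` -/
def memE (T : ℝ) (x : ℝ → Sd) : Prop :=
  memBbE T x ∧ x 0 ≠ ⊤ ∧
  ∀ t ∈ Set.Ioc 0 T, x t = ⊤ →
    0 < sigmaInf x t ∧ x (sigmaInf x t) = ⊤ ∧ leftLim T x (sigmaInf x t) ⊤

/-- `Λ_T(x)`, the time spent at `∞` -/
noncomputable def LambdaT (T : ℝ) (x : ℝ → Sd) : ℝ :=
  (MeasureTheory.volume {s | s ∈ Set.Icc 0 T ∧ x s = ⊤}).toReal

/-- `D^*([0,T], S_d)`: càdlàg trajectories spending no time at `∞`, continuous at `T` -/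
def memDstar (T : ℝ) (x : ℝ → Sd) : Prop :=
  memDd T x ∧ LambdaT T x = 0 ∧ leftLim T x T (x T)

/-- `E^*([0,T], S_d)`: the image of `D^*([0,T], S_d)` under `R_∞` -/
def memEstar (T : ℝ) (x : ℝ → Sd) : Prop :=
  memE T x ∧ ∃ y, memDstar T y ∧ Set.EqOn (Rinf T y) x (Set.Icc 0 T)

/-- the set `Λ` of time changes: increasing continuous bijections of `[0,T]` fixing `0, T` -/
def TimeChange (T : ℝ) (l : ℝ → ℝ) : Prop :=
  l 0 = 0 ∧ l T = T ∧ ContinuousOn l (Set.Icc 0 T) ∧ StrictMonoOn l (Set.Icc 0 T) ∧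
    Set.MapsTo l (Set.Icc 0 T) (Set.Icc 0 T)

/-- the Skorohod metric -/
noncomputable def dS (T : ℝ) (x y : ℝ → Sd) : ℝ :=
  sInf {a : ℝ | ∃ l, TimeChange T l ∧
    (∀ t ∈ Set.Icc 0 T, sdist (x t) (y (l t)) ≤ a) ∧
    ∀ s ∈ Set.Icc 0 T, ∀ t ∈ Set.Icc 0 T, s < t → |Real.log ((l t - l s) / (t - s))| ≤ a}

/-- the soft metric `d(x,y) = Σ_m 2^{-(m+1)} d_S(R_m x, R_m y)` -/
noncomputable def dE (T : ℝ) (x y : ℝ → Sd) : ℝ :=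
  ∑' m : ℕ, (1 / 2 : ℝ) ^ (m + 1) * dS T (Rm T m x) (Rm T m y)

/-- the left endpoints of the maximal intervals on which `x = j` -/
def entryPoints (T : ℝ) (j : Sd) (x : ℝ → Sd) : Set ℝ :=
  {t | t ∈ Set.Icc 0 T ∧ x t = j ∧
    (t = 0 ∨ ∀ δ > 0, ∃ s ∈ Set.Ioo (t - δ) t ∩ Set.Icc 0 T, x s ≠ j)}

/-- `N_j(x)`, the number of visits of `x` to `j` -/
noncomputable def Nvisits (T : ℝ) (j : Sd) (x : ℝ → Sd) : ℕ := (entryPoints T j x).ncard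

/-- the start of the `(l+1)`-th visit to `j` (0-indexed) -/
noncomputable def nthEntry (T : ℝ) (j : Sd) (x : ℝ → Sd) (l : ℕ) : ℝ :=
  sInf {e | e ∈ entryPoints T j x ∧ {s | s ∈ entryPoints T j x ∧ s < e}.ncard = l}

noncomputable def exitTime (T : ℝ) (j : Sd) (x : ℝ → Sd) (t : ℝ) : ℝ :=
  sInf ({s | s ∈ Set.Ioc t T ∧ x s ≠ j} ∪ {T})

/-- `T_{j,l}(x)`, the length of the `l`-th holding interval at `j` (1-indexed),
`0` if `l > N_j(x)` -/
noncomputable def holdingTime (T : ℝ) (j : Sd) (x : ℝ → Sd) (l : ℕ) : ℝ :=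
  if 1 ≤ l ∧ l ≤ Nvisits T j x then
    exitTime T j x (nthEntry T j x (l - 1)) - nthEntry T j x (l - 1)
  else 0

end Soft


namespace SoftProof
open Soft

/-- basis of the left filter -/
lemma lf_basis (T t : ℝ) : (lf T t).HasBasis (fun ε : ℝ => 0 < ε)
    (fun ε => Ioo (t - ε) t ∩ Icc 0 T) := by
  have h := (nhds_basis_Ioo_pos t).inf_principal (Icc 0 T ∩ Iio t)
  refine h.to_hasBasis (fun ε hε => ⟨ε, hε, ?_⟩) (fun ε hε => ⟨ε, hε, ?_⟩)
  · rintro w ⟨⟨hw1, hw2⟩, hw3, hw4⟩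
    exact ⟨⟨hw1, by linarith⟩, ⟨hw3, hw4⟩, hw2⟩
  · rintro w ⟨⟨hw1, hw2⟩, ⟨hw3, hw4⟩, hw5⟩
    exact ⟨⟨hw1, hw5⟩, hw3, hw4⟩

lemma rf_basis (T t : ℝ) : (rf T t).HasBasis (fun ε : ℝ => 0 < ε)
    (fun ε => Ioo t (t + ε) ∩ Icc 0 T) := by
  have h := (nhds_basis_Ioo_pos t).inf_principal (Icc 0 T ∩ Ioi t)
  refine h.to_hasBasis (fun ε hε => ⟨ε, hε, ?_⟩) (fun ε hε => ⟨ε, hε, ?_⟩)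
  · rintro w ⟨⟨hw1, hw2⟩, hw3, hw4⟩
    exact ⟨⟨by linarith, hw2⟩, ⟨hw3, hw4⟩, hw1⟩
  · rintro w ⟨⟨hw1, hw2⟩, ⟨hw3, hw4⟩, hw5⟩
    exact ⟨⟨hw5, hw2⟩, hw3, hw4⟩

lemma eventually_lf_iff {T t : ℝ} {p : ℝ → Prop} :
    (∀ᶠ w in lf T t, p w) ↔ ∃ ε > 0, ∀ w, t - ε < w → w < t → 0 ≤ w → w ≤ T → p w := by
  rw [(lf_basis T t).eventually_iff]
  constructor
  · rintro ⟨ε, hε, h⟩; exact ⟨ε, hε, fun w h1 h2 h3 h4 => h ⟨⟨h1, h2⟩, h3, h4⟩⟩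
  · rintro ⟨ε, hε, h⟩; exact ⟨ε, hε, fun w ⟨⟨h1, h2⟩, h3, h4⟩ => h w h1 h2 h3 h4⟩

lemma eventually_rf_iff {T t : ℝ} {p : ℝ → Prop} :
    (∀ᶠ w in rf T t, p w) ↔ ∃ ε > 0, ∀ w, t < w → w < t + ε → 0 ≤ w → w ≤ T → p w := by
  rw [(rf_basis T t).eventually_iff]
  constructor
  · rintro ⟨ε, hε, h⟩; exact ⟨ε, hε, fun w h1 h2 h3 h4 => h ⟨⟨h1, h2⟩, h3, h4⟩⟩
  · rintro ⟨ε, hε, h⟩; exact ⟨ε, hε, fun w ⟨⟨h1, h2⟩, h3, h4⟩ => h w h1 h2 h3 h4⟩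

lemma frequently_lf_iff {T t : ℝ} {p : ℝ → Prop} :
    (∃ᶠ w in lf T t, p w) ↔ ∀ ε > 0, ∃ w, (t - ε < w ∧ w < t) ∧ (0 ≤ w ∧ w ≤ T) ∧ p w := by
  rw [(lf_basis T t).frequently_iff]
  constructor
  · rintro h ε hε; obtain ⟨w, ⟨⟨h1,h2⟩,h3,h4⟩, hp⟩ := h ε hε; exact ⟨w, ⟨h1,h2⟩, ⟨h3,h4⟩, hp⟩
  · rintro h ε hε; obtain ⟨w, ⟨h1,h2⟩, ⟨h3,h4⟩, hp⟩ := h ε hε; exact ⟨w, ⟨⟨h1,h2⟩,h3,h4⟩, hp⟩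

lemma frequently_rf_iff {T t : ℝ} {p : ℝ → Prop} :
    (∃ᶠ w in rf T t, p w) ↔ ∀ ε > 0, ∃ w, (t < w ∧ w < t + ε) ∧ (0 ≤ w ∧ w ≤ T) ∧ p w := by
  rw [(rf_basis T t).frequently_iff]
  constructor
  · rintro h ε hε; obtain ⟨w, ⟨⟨h1,h2⟩,h3,h4⟩, hp⟩ := h ε hε; exact ⟨w, ⟨h1,h2⟩, ⟨h3,h4⟩, hp⟩
  · rintro h ε hε; obtain ⟨w, ⟨h1,h2⟩, ⟨h3,h4⟩, hp⟩ := h ε hε; exact ⟨w, ⟨⟨h1,h2⟩,h3,h4⟩, hp⟩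

lemma lf_neBot {T t : ℝ} (h0 : 0 < t) (hT : t ≤ T) : (lf T t).NeBot := by
  rw [(lf_basis T t).neBot_iff]
  intro ε hε
  refine ⟨max (t - ε/2) (t/2), ⟨?_, ?_⟩, ?_, ?_⟩
  · exact lt_of_lt_of_le (by linarith) (le_max_left _ _)
  · exact max_lt (by linarith) (by linarith)
  · exact le_trans (by linarith) (le_max_right _ _)
  · exact le_trans (le_of_lt (max_lt (by linarith) (by linarith))) hT

lemma rf_neBot {T t : ℝ} (h0 : 0 ≤ t) (hT : t < T) : (rf T t).NeBot := by
  rw [(rf_basis T t).neBot_iff]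
  intro ε hε
  refine ⟨min (t + ε/2) ((t+T)/2), ⟨?_, ?_⟩, ?_, ?_⟩
  · exact lt_min (by linarith) (by linarith)
  · exact lt_of_le_of_lt (min_le_left _ _) (by linarith)
  · exact le_trans h0 (le_of_lt (lt_min (by linarith) (by linarith)))
  · exact le_trans (min_le_right _ _) (by linarith)

lemma eventually_mem_lf {T t : ℝ} : ∀ᶠ w in lf T t, w ∈ Icc 0 T ∧ w < t := by
  rw [eventually_lf_iff]; exact ⟨1, one_pos, fun w h1 h2 h3 h4 => ⟨⟨h3, h4⟩, h2⟩⟩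

lemma eventually_mem_rf {T t : ℝ} : ∀ᶠ w in rf T t, w ∈ Icc 0 T ∧ t < w := by
  rw [eventually_rf_iff]; exact ⟨1, one_pos, fun w h1 h2 h3 h4 => ⟨⟨h3, h4⟩, h1⟩⟩

/-- eventual membership of `Ioi a` / `Iio b` for `a < t < b` -/
lemma eventually_gt_lf {T t a : ℝ} (ha : a < t) : ∀ᶠ w in lf T t, a < w := by
  rw [eventually_lf_iff]; exact ⟨t - a, by linarith, fun w h1 _ _ _ => by linarith⟩

lemma eventually_lt_rf {T t b : ℝ} (hb : t < b) : ∀ᶠ w in rf T t, w < b := by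
  rw [eventually_rf_iff]; exact ⟨b - t, by linarith, fun w _ h2 _ _ => by linarith⟩

/-- points of a set with supremum `a` not containing `a` are frequent on the left of `a` -/
lemma freq_lf_of_csSup {T a : ℝ} {A : Set ℝ} (hne : A.Nonempty) (hsub : A ⊆ Icc 0 T)
    (hbdd : ∀ w ∈ A, w ≤ a) (hsup : sSup A = a) (hna : a ∉ A) :
    ∃ᶠ w in lf T a, w ∈ A := by
  rw [frequently_lf_iff]
  intro ε hε
  obtain ⟨w, hwA, hw⟩ := exists_lt_of_lt_csSup hne (by rw [hsup]; linarith : a - ε < sSup A)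
  have hwa : w ≤ a := hbdd w hwA
  have : w ≠ a := fun h => hna (h ▸ hwA)
  exact ⟨w, ⟨hw, lt_of_le_of_ne hwa this⟩, ⟨(hsub hwA).1, (hsub hwA).2⟩, hwA⟩

lemma freq_rf_of_csInf {T a : ℝ} {A : Set ℝ} (hne : A.Nonempty) (hsub : A ⊆ Icc 0 T)
    (hbdd : ∀ w ∈ A, a ≤ w) (hinf : sInf A = a) (hna : a ∉ A) :
    ∃ᶠ w in rf T a, w ∈ A := by
  rw [frequently_rf_iff]
  intro ε hε
  obtain ⟨w, hwA, hw⟩ := exists_lt_of_csInf_lt hne (by rw [hinf]; linarith : sInf A < a + ε)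
  have hwa : a ≤ w := hbdd w hwA
  have : w ≠ a := fun h => hna (h ▸ hwA)
  exact ⟨w, ⟨lt_of_le_of_ne hwa (Ne.symm this), hw⟩, ⟨(hsub hwA).1, (hsub hwA).2⟩, hwA⟩

/-! ### ℕ∞ facts -/

lemma tendsto_coe_iff {l : Filter ℝ} {x : ℝ → Sd} {n : ℕ} :
    Tendsto x l (𝓝 (n : Sd)) ↔ ∀ᶠ w in l, x w = (n : Sd) := by
  rw [ENat.nhds_eq_pure (ENat.coe_ne_top n), tendsto_pure]

lemma mapClusterPt_coe_iff {l : Filter ℝ} {x : ℝ → Sd} {n : ℕ} :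
    MapClusterPt (n : Sd) l x ↔ ∃ᶠ w in l, x w = (n : Sd) := by
  rw [mapClusterPt_iff_frequently]
  constructor
  · intro h
    have := h {(n : Sd)} (ENat.mem_nhds_natCast_iff n |>.2 rfl)
    exact this.mono fun w hw => hw
  · intro h s hs
    have hmem : (n : Sd) ∈ s := (ENat.mem_nhds_natCast_iff n).1 hs
    exact h.mono fun w hw => hw ▸ hmem

lemma mem_nhds_top_iff' {s : Set Sd} (hs : s ∈ 𝓝 (⊤ : Sd)) : ∃ k : ℕ, Ioi (k : Sd) ⊆ s := by
  obtain ⟨a, ha, hsub⟩ := (nhds_top_basis.mem_iff).1 hs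
  lift a to ℕ using ha.ne
  exact ⟨a, hsub⟩

lemma mapClusterPt_top_iff {l : Filter ℝ} {x : ℝ → Sd} :
    MapClusterPt (⊤ : Sd) l x ↔ ∀ k : ℕ, ∃ᶠ w in l, (k : Sd) < x w := by
  rw [mapClusterPt_iff_frequently]
  constructor
  · intro h k
    have := h (Ioi (k : Sd)) (Ioi_mem_nhds (WithTop.coe_lt_top k))
    exact this.mono fun w hw => hw
  · intro h s hs
    obtain ⟨k, hk⟩ := mem_nhds_top_iff' hs
    exact (h k).mono fun w hw => hk hw

lemma cluster_eq_of_tendsto {l : Filter ℝ} [l.NeBot] {x : ℝ → Sd} {L a : Sd}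
    (h : MapClusterPt L l x) (h2 : Tendsto x l (𝓝 a)) : L = a :=
  eq_of_nhds_neBot (ClusterPt.mono h h2)

/-- in the compact space ℕ∞, a filter with unique map-cluster point converges -/
lemma tendsto_of_unique_cluster {l : Filter ℝ} [hl : l.NeBot] {x : ℝ → Sd} {a : Sd}
    (h : ∀ L, MapClusterPt L l x → L = a) : Tendsto x l (𝓝 a) := by
  by_contra hc
  rw [tendsto_iff_forall_eventually_mem] at hc
  push_neg at hc
  obtain ⟨s, hs, hev⟩ := hc
  obtain ⟨c, hc_mem, hc_closed, hc_sub⟩ := exists_mem_nhds_isClosed_subset hs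
  have hfreq : ∃ᶠ w in l, x w ∉ c :=
    hev.mono fun w hw h2 => hw (hc_sub h2)
  have hne : NeBot (map x (l ⊓ 𝓟 {w | x w ∉ c})) := by
    rw [Filter.frequently_iff_neBot] at hfreq
    exact map_neBot
  obtain ⟨L, hL⟩ := exists_clusterPt_of_compactSpace (map x (l ⊓ 𝓟 {w | x w ∉ c}))
  have hL1 : MapClusterPt L l x := ClusterPt.mono hL (map_mono inf_le_left)
  have hL2 : ClusterPt L (𝓟 cᶜ) := by
    refine ClusterPt.mono hL ?_
    refine le_trans (map_mono inf_le_right) ?_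
    rw [map_principal]
    exact principal_mono.2 (by intro v hv; obtain ⟨w, hw, rfl⟩ := hv; exact hw)
  have hLc : L ∈ closure cᶜ := by
    rw [mem_closure_iff_clusterPt]
    exact hL2
  rw [closure_compl] at hLc
  have ha_int : a ∈ interior c := mem_interior_iff_mem_nhds.2 hc_mem
  exact hLc (h L hL1 ▸ ha_int)


/-! ### the trichotomy lemma -/

lemma TRI {l : Filter ℝ} {x : ℝ → Sd} {n : ℕ}
    (hk : ∀ k : ℕ, ∀ᶠ s in l, x s = (n : Sd) ∨ (k : Sd) < x s) :
    Tendsto x l (𝓝 (n : Sd)) ∨ Tendsto x l (𝓝 ⊤) ∨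
      (({L : Sd | MapClusterPt L l x} = {(n : Sd), ⊤}) ∧ ¬ ∃ L, Tendsto x l (𝓝 L)) := by
  by_cases h1 : ∀ᶠ s in l, x s = (n : Sd)
  · exact Or.inl (tendsto_coe_iff.2 h1)
  by_cases h2 : ∀ᶠ s in l, x s ≠ (n : Sd)
  · refine Or.inr (Or.inl (ENat.tendsto_nhds_top_iff_natCast_lt.2 fun k => ?_))
    exact ((hk k).and h2).mono fun s ⟨hor, hne⟩ => hor.resolve_left hne
  rw [not_eventually] at h1 h2
  have hf2 : ∃ᶠ s in l, x s = (n : Sd) := h2.mono fun s hs => not_not.1 hs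
  have hNB : l.NeBot := by
    rcases Filter.frequently_iff_neBot.1 hf2 with h
    exact neBot_of_le (inf_le_left : l ⊓ 𝓟 {s | x s = (n:Sd)} ≤ l)
  refine Or.inr (Or.inr ⟨?_, ?_⟩)
  · ext L
    simp only [mem_setOf_eq, mem_insert_iff, mem_singleton_iff]
    constructor
    · intro hL
      induction L using ENat.recTopCoe with
      | top => exact Or.inr rfl
      | coe n' =>
        left
        by_contra hne
        have hfreq : ∃ᶠ w in l, x w = (n' : Sd) := mapClusterPt_coe_iff.1 hL
        obtain ⟨s, hs1, hs2⟩ := (hfreq.and_eventually (hk n')).exists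
        rcases hs2 with h | h
        · exact hne (by rw [← hs1, h])
        · rw [hs1] at h; exact lt_irrefl _ (by exact_mod_cast h)
    · rintro (rfl | rfl)
      · exact mapClusterPt_coe_iff.2 hf2
      · refine mapClusterPt_top_iff.2 fun k => ?_
        exact (h1.and_eventually (hk k)).mono fun s ⟨hne, hor⟩ => hor.resolve_left hne
  · rintro ⟨L, hL⟩
    have e1 : (n : Sd) = L := cluster_eq_of_tendsto (mapClusterPt_coe_iff.2 hf2) hL
    have e2 : (⊤ : Sd) = L := by
      refine cluster_eq_of_tendsto ?_ hL
      refine mapClusterPt_top_iff.2 fun k => ?_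
      exact (h1.and_eventually (hk k)).mono fun s ⟨hne, hor⟩ => hor.resolve_left hne
    exact ENat.coe_ne_top n (e1.trans e2.symm)

/-! ### record operator computation lemmas -/

lemma lastVisit_eq_self {P : Sd → Prop} {x : ℝ → Sd} {t : ℝ} (ht : 0 ≤ t) (h : P (x t)) :
    lastVisit P x t = t := by
  apply le_antisymm
  · exact csSup_le ⟨t, ⟨⟨ht, le_refl t⟩, h⟩⟩ (fun s hs => hs.1.2)
  · exact le_csSup ⟨t, fun s hs => hs.1.2⟩ ⟨⟨ht, le_refl t⟩, h⟩

lemma srec_self {T : ℝ} {P : Sd → Prop} {x : ℝ → Sd} {t : ℝ} (ht : 0 ≤ t) (h : P (x t)) :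
    srec T P x t = x t := by
  rw [srec, if_pos ⟨t, ⟨ht, le_refl t⟩, h⟩, lastVisit_eq_self ht h, if_pos h]

lemma srec_of_not_exists {T : ℝ} {P : Sd → Prop} {x : ℝ → Sd} {t : ℝ}
    (h : ¬ ∃ s ∈ Icc 0 t, P (x s)) : srec T P x t = 0 := by
  rw [srec, if_neg h]

lemma visit_le_lastVisit {P : Sd → Prop} {x : ℝ → Sd} {t s : ℝ}
    (hs : s ∈ Icc 0 t) (hP : P (x s)) : s ≤ lastVisit P x t :=
  le_csSup ⟨t, fun u hu => hu.1.2⟩ ⟨hs, hP⟩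

lemma lastVisit_le {P : Sd → Prop} {x : ℝ → Sd} {t : ℝ}
    (hne : ∃ s ∈ Icc 0 t, P (x s)) : lastVisit P x t ≤ t := by
  obtain ⟨s, hs, hP⟩ := hne
  exact csSup_le ⟨s, hs, hP⟩ (fun u hu => hu.1.2)

lemma lastVisit_nonneg {P : Sd → Prop} {x : ℝ → Sd} {t : ℝ}
    (hne : ∃ s ∈ Icc 0 t, P (x s)) : 0 ≤ lastVisit P x t := by
  obtain ⟨s, hs, hP⟩ := hne
  exact le_trans hs.1 (visit_le_lastVisit hs hP)

lemma no_visit_above {P : Sd → Prop} {x : ℝ → Sd} {t s : ℝ}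
    (hs : s ∈ Icc 0 t) (hgt : lastVisit P x t < s) : ¬ P (x s) :=
  fun hP => absurd (visit_le_lastVisit hs hP) (not_le.2 hgt)

lemma srec_eq_on_gap {T : ℝ} {P : Sd → Prop} {x : ℝ → Sd} {t t' : ℝ}
    (hne : ∃ s ∈ Icc 0 t, P (x s)) (h1 : lastVisit P x t ≤ t') (h2 : t' ≤ t) :
    srec T P x t' = srec T P x t := by
  obtain ⟨s, hs, hP⟩ := hne
  have hsν : s ≤ lastVisit P x t := visit_le_lastVisit hs hP
  have hex' : ∃ u ∈ Icc 0 t', P (x u) := ⟨s, ⟨hs.1, le_trans hsν h1⟩, hP⟩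
  have hset : {u | u ∈ Icc 0 t' ∧ P (x u)} = {u | u ∈ Icc 0 t ∧ P (x u)} := by
    ext u
    constructor
    · rintro ⟨⟨hu0, hut⟩, hPu⟩; exact ⟨⟨hu0, le_trans hut h2⟩, hPu⟩
    · rintro ⟨hu, hPu⟩
      exact ⟨⟨hu.1, le_trans (visit_le_lastVisit hu hPu) h1⟩, hPu⟩
  have hLV : lastVisit P x t' = lastVisit P x t := by
    rw [lastVisit, lastVisit, hset]
  rw [srec, srec, if_pos hex', hLV, if_pos (⟨s, hs, hP⟩ : ∃ u ∈ Icc 0 t, P (x u))]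

lemma freq_visit_lf {T : ℝ} {P : Sd → Prop} {x : ℝ → Sd} {t : ℝ}
    (hne : ∃ s ∈ Icc 0 t, P (x s)) (htT : t ≤ T)
    (hP : ¬ P (x (lastVisit P x t))) :
    ∃ᶠ w in lf T (lastVisit P x t), P (x w) := by
  obtain ⟨s, hs, hPs⟩ := hne
  have h := freq_lf_of_csSup (T := T) (A := {u | u ∈ Icc 0 t ∧ P (x u)})
    ⟨s, hs, hPs⟩ (fun u hu => ⟨hu.1.1, le_trans hu.1.2 htT⟩)
    (fun u hu => visit_le_lastVisit hu.1 hu.2) rfl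
    (fun hmem => hP hmem.2)
  exact h.mono fun w hw => hw.2

lemma srec_of_visit {T : ℝ} {P : Sd → Prop} {x : ℝ → Sd} {t ν : ℝ}
    (hne : ∃ s ∈ Icc 0 t, P (x s)) (hν : lastVisit P x t = ν) (hP : P (x ν)) :
    srec T P x t = x ν := by
  rw [srec, if_pos hne, hν, if_pos hP]

lemma srec_of_cluster {T : ℝ} {P : Sd → Prop} {x : ℝ → Sd} {t ν : ℝ} {n : ℕ}
    (hne : ∃ s ∈ Icc 0 t, P (x s)) (hν : lastVisit P x t = ν) (hP : ¬ P (x ν))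
    (hν0 : 0 < ν) (hνT : ν ≤ T)
    (htri : ∀ k : ℕ, ∀ᶠ u in lf T ν, x u = (n : Sd) ∨ (k : Sd) < x u)
    (hfreq : ∃ᶠ u in lf T ν, x u = (n : Sd)) :
    srec T P x t = (n : Sd) := by
  have hNB : NeBot (lf T ν) := lf_neBot hν0 hνT
  rcases TRI htri with h | h | ⟨hpair, hnoL⟩
  · have hex : ∃ L, leftLim T x ν L := ⟨(n : Sd), h⟩
    rw [srec, if_pos hne, hν, if_neg hP, dif_pos hex]
    exact tendsto_nhds_unique hex.choose_spec h
  · exfalso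
    obtain ⟨u, hu1, hu2⟩ :=
      (hfreq.and_eventually (ENat.tendsto_nhds_top_iff_natCast_lt.1 h n)).exists
    rw [hu1] at hu2
    exact lt_irrefl _ (by exact_mod_cast hu2)
  · have hnoL' : ¬ ∃ L, leftLim T x ν L := hnoL
    have hex2 : ∃ m : ℕ, softLeftPair T x ν m := ⟨n, hpair⟩
    rw [srec, if_pos hne, hν, if_neg hP, dif_neg hnoL', dif_pos hex2]
    have hspec : {L : Sd | MapClusterPt L (lf T ν) x} = {(hex2.choose : Sd), ⊤} :=
      hex2.choose_spec
    have hmem : (n : Sd) ∈ ({(hex2.choose : Sd), ⊤} : Set Sd) := by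
      rw [← hspec, hpair]; exact mem_insert _ _
    rcases hmem with h' | h'
    · exact_mod_cast h'.symm
    · exact absurd h' (ENat.coe_ne_top n)

/-! ### family lemmas -/

/-- bundled hypotheses of the theorem -/
structure Ctx (T : ℝ) (y : ℕ → ℝ → Sd) : Prop where
  hT : 0 < T
  hmem : ∀ m, memD T m (y m)
  hcomp : ∀ m, Set.EqOn (Rm T m (y (m+1))) (y m) (Set.Icc 0 T)

/-- the candidate limit trajectory -/
noncomputable def limY (y : ℕ → ℝ → Sd) : ℝ → Sd := fun t => ⨆ m, y m t

variable {T : ℝ} {y : ℕ → ℝ → Sd}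

lemma le_limY {t : ℝ} (m : ℕ) : y m t ≤ limY y t := le_iSup (fun m => y m t) m

lemma L_bound (c : Ctx T y) {t : ℝ} {m : ℕ} (ht : t ∈ Icc 0 T) : y m t ≤ (m : Sd) :=
  (c.hmem m).1 t ht

lemma L_ne_top (c : Ctx T y) {t : ℝ} {m : ℕ} (ht : t ∈ Icc 0 T) : y m t ≠ ⊤ :=
  fun h => by simpa [h] using L_bound c (m := m) ht

lemma L_key1 (c : Ctx T y) {t : ℝ} {m : ℕ} (ht : t ∈ Icc 0 T)
    (h : y (m+1) t ≤ (m : Sd)) : y m t = y (m+1) t := by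
  rw [← c.hcomp m ht, Rm, srec_self (P := fun k => k ≤ (m : Sd)) ht.1 h]

lemma L_mono (c : Ctx T y) {t : ℝ} (ht : t ∈ Icc 0 T) : Monotone (fun m => y m t) := by
  apply monotone_nat_of_le_succ
  intro m
  by_cases h : y (m+1) t ≤ (m : Sd)
  · rw [L_key1 c ht h]
  · exact le_trans (L_bound c ht) (le_of_not_ge h)

lemma L_const_from (c : Ctx T y) {t : ℝ} {k : ℕ} (ht : t ∈ Icc 0 T)
    (h : ∀ j, k ≤ j → y (j+1) t ≤ (j : Sd)) : ∀ j, k ≤ j → y j t = y k t := by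
  intro j hj
  induction j with
  | zero => rw [Nat.le_zero.1 hj]
  | succ j ih =>
    rcases Nat.lt_or_ge j k with hlt | hge
    · have : k = j + 1 := le_antisymm hj hlt
      rw [this]
    · rw [← L_key1 c ht (h j hge)]
      exact ih hge

lemma L_FVL (c : Ctx T y) {t : ℝ} {k : ℕ} (ht : t ∈ Icc 0 T)
    (h : limY y t ≤ (k : Sd)) : y k t = limY y t := by
  have hconst := L_const_from c (k := k) ht (fun j hj =>
    le_trans (le_limY (j+1)) (le_trans h (by exact_mod_cast Nat.cast_le.2 hj)))
  apply le_antisymm (le_limY k)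
  apply iSup_le
  intro j
  rcases le_total j k with h' | h'
  · exact L_mono c ht h'
  · exact le_of_eq (hconst j h')

/-- if the supremum is `⊤` then the ceiling `y (k+1) t = k+1` is attained beyond any level -/
lemma L_ceil (c : Ctx T y) {t : ℝ} (ht : t ∈ Icc 0 T) (h : limY y t = ⊤) :
    ∀ K : ℕ, ∃ k, K ≤ k ∧ y (k+1) t = ((k+1 : ℕ) : Sd) := by
  intro K
  by_contra hc
  push_neg at hc
  have hle : ∀ j, K ≤ j → y (j+1) t ≤ (j : Sd) := by
    intro j hj
    have h1 : y (j+1) t ≤ ((j+1 : ℕ) : Sd) := L_bound c ht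
    have h2 := hc j hj
    have h3 : y (j+1) t ≠ ⊤ := L_ne_top c ht
    lift y (j+1) t to ℕ using h3 with a ha
    have : a ≤ j + 1 := by exact_mod_cast h1
    have : a ≠ j + 1 := fun hr => h2 (by exact_mod_cast hr)
    exact_mod_cast by omega
  have hconst := L_const_from c ht hle
  have : limY y t ≤ y K t := by
    apply iSup_le
    intro j
    rcases le_total j K with h' | h'
    · exact L_mono c ht h'
    · exact le_of_eq (hconst j h')
  rw [h] at this
  exact L_ne_top c (m := K) ht (top_le_iff.1 this)

lemma L_unbounded (c : Ctx T y) {t : ℝ} (h : limY y t = ⊤) (M : ℕ) :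
    ∃ k, (M : Sd) < y k t := by
  have : (M : Sd) < limY y t := h ▸ WithTop.coe_lt_top M
  exact lt_iSup_iff.1 this

/-- right local constancy -/
lemma L_rc (c : Ctx T y) {t : ℝ} (k : ℕ) (ht : t ∈ Ico 0 T) :
    ∀ᶠ w in rf T t, y k w = y k t := by
  have hR := (c.hmem k).2.1 t ht
  have hne : y k t ≠ ⊤ := L_ne_top c ⟨ht.1, le_of_lt ht.2⟩
  rw [rightLim, ENat.nhds_eq_pure hne] at hR
  exact tendsto_pure.1 hR

/-- left local constancy: the left value is finite -/
lemma L_lc (c : Ctx T y) {t : ℝ} (k : ℕ) (ht : t ∈ Ioc 0 T) :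
    ∃ Λ : ℕ, (Λ : Sd) ≤ (k : Sd) ∧ ∀ᶠ w in lf T t, y k w = (Λ : Sd) := by
  obtain ⟨L, hL⟩ := (c.hmem k).2.2 t ht
  have hNB := lf_neBot ht.1 ht.2
  rw [leftLim] at hL
  by_cases hLtop : L = ⊤
  · exfalso
    subst hLtop
    have h1 : ∀ᶠ w in lf T t, (k : Sd) < y k w :=
      ENat.tendsto_nhds_top_iff_natCast_lt.1 hL k
    obtain ⟨w, hw1, hw2⟩ := (h1.and eventually_mem_lf).exists
    exact absurd (L_bound c (m := k) hw2.1) (not_le.2 hw1)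
  · lift L to ℕ using hLtop
    have hev : ∀ᶠ w in lf T t, y k w = (L : Sd) := by
      rw [ENat.nhds_eq_pure (ENat.coe_ne_top L)] at hL
      exact tendsto_pure.1 hL
    obtain ⟨w, hw1, hw2⟩ := (hev.and eventually_mem_lf).exists
    exact ⟨L, hw1 ▸ L_bound c hw2.1, hev⟩

/-- the record `y j` cannot change its value at `t` while `y (j+1)` is strictly above `j` -/
lemma ML (c : Ctx T y) {t : ℝ} {j Λ : ℕ} (ht : t ∈ Ioc 0 T)
    (hev : ∀ᶠ w in lf T t, y j w = (Λ : Sd)) (hch : y j t ≠ (Λ : Sd)) :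
    y (j+1) t ≤ (j : Sd) := by
  have htIcc : t ∈ Icc 0 T := ⟨le_of_lt ht.1, ht.2⟩
  have hNB := lf_neBot ht.1 ht.2
  by_contra hj1
  set x := y (j+1) with hx
  set P : Sd → Prop := fun v => v ≤ (j : Sd) with hPdef
  have hYw : ∀ w ∈ Icc 0 T, y j w = srec T P x w := fun w hw => ((c.hcomp j) hw).symm
  by_cases hvis : ∃ s ∈ Icc 0 t, P (x s)
  · have hνt : lastVisit P x t ≤ t := lastVisit_le hvis
    have hν0 : 0 ≤ lastVisit P x t := lastVisit_nonneg hvis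
    rcases lt_or_eq_of_le hνt with hlt | heq
    · have hgap : ∀ w, lastVisit P x t < w → w < t → 0 ≤ w → y j w = y j t := by
        intro w h1 h2 h0
        rw [hYw w ⟨h0, le_trans (le_of_lt h2) ht.2⟩, hYw t htIcc]
        exact srec_eq_on_gap hvis (le_of_lt h1) (le_of_lt h2)
      obtain ⟨w, ⟨hw1, hw2⟩, hw3⟩ :=
        ((hev.and (eventually_gt_lf hlt)).and eventually_mem_lf).exists
      exact hch (by rw [← hgap w hw2 hw3.2 hw3.1.1, hw1])
    · have hPt : ¬ P (x t) := hj1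
      have hPν : ¬ P (x (lastVisit P x t)) := by rw [heq]; exact hPt
      have hfreq0 : ∃ᶠ w in lf T (lastVisit P x t), P (x w) := freq_visit_lf hvis ht.2 hPν
      have hfreq : ∃ᶠ w in lf T t, P (x w) := by rwa [heq] at hfreq0
      obtain ⟨Λ', hΛ'le, hev'⟩ := L_lc c (j+1) ht
      obtain ⟨w, hPw, hxw⟩ := (hfreq.and_eventually hev').exists
      have hΛ'j : (Λ' : Sd) ≤ (j : Sd) := hxw ▸ hPw
      have hevj : ∀ᶠ w in lf T t, y j w = (Λ' : Sd) := by
        filter_upwards [hev', eventually_mem_lf] with w h1 h2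
        rw [← h1]
        exact L_key1 c h2.1 (le_trans (le_of_eq h1) hΛ'j)
      have hΛΛ' : (Λ : Sd) = (Λ' : Sd) := by
        obtain ⟨w, e1, e2⟩ := (hev.and hevj).exists
        rw [← e1, e2]
      have hexL : ∃ L, leftLim T x t L := ⟨(Λ' : Sd), tendsto_coe_iff.2 hev'⟩
      have hval : y j t = (Λ' : Sd) := by
        rw [hYw t htIcc, srec, if_pos hvis, heq, if_neg hPt, dif_pos hexL]
        exact tendsto_nhds_unique hexL.choose_spec (tendsto_coe_iff.2 hev')
      exact hch (by rw [hval, hΛΛ'])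
  · have h0 : ∀ w ∈ Icc 0 T, w ≤ t → y j w = 0 := by
      intro w hw hwt
      rw [hYw w hw]
      exact srec_of_not_exists (fun ⟨s, hs, hP⟩ => hvis ⟨s, ⟨hs.1, le_trans hs.2 hwt⟩, hP⟩)
    have hevz : ∀ᶠ w in lf T t, y j w = 0 := by
      filter_upwards [eventually_mem_lf] with w hw
      exact h0 w hw.1 (le_of_lt hw.2)
    obtain ⟨w, e1, e2⟩ := (hev.and hevz).exists
    have hΛ0 : (Λ : Sd) = 0 := by rw [← e1, e2]
    exact hch (by rw [h0 t htIcc (le_refl t), hΛ0])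

/-- Master lemma: if some `y k` changes value at `t`, then the whole family is pinned:
`limY y t = y k t`. -/
lemma Mstar (c : Ctx T y) {t : ℝ} {k Λ : ℕ} (ht : t ∈ Ioc 0 T)
    (hev : ∀ᶠ w in lf T t, y k w = (Λ : Sd)) (hch : y k t ≠ (Λ : Sd)) :
    limY y t = y k t := by
  have htIcc : t ∈ Icc 0 T := ⟨le_of_lt ht.1, ht.2⟩
  have hNB := lf_neBot ht.1 ht.2
  have hck : y k t ≤ (k : Sd) := L_bound c htIcc
  have hstep : ∀ j, k ≤ j → (y j t = y k t ∧
      ∀ Λj : ℕ, (∀ᶠ w in lf T t, y j w = (Λj : Sd)) → (Λj : Sd) ≠ y j t) := by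
    intro j hj
    induction j with
    | zero =>
      obtain rfl : k = 0 := Nat.le_zero.1 hj
      refine ⟨rfl, fun Λj hevj hne => ?_⟩
      obtain ⟨w, e1, e2⟩ := (hev.and hevj).exists
      exact hch (by rw [← hne, ← e2, e1])
    | succ j ih =>
      rcases Nat.lt_or_ge j k with hlt | hge
      · obtain rfl : k = j + 1 := le_antisymm hj hlt
        refine ⟨rfl, fun Λj hevj hne => ?_⟩
        obtain ⟨w, e1, e2⟩ := (hev.and hevj).exists
        exact hch (by rw [← hne, ← e2, e1])
      · obtain ⟨hval, hwin⟩ := ih hge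
        obtain ⟨Λj, hΛjle, hevj⟩ := L_lc c j ht
        have hchj : y j t ≠ (Λj : Sd) := fun h => (hwin Λj hevj) h.symm
        have hle : y (j+1) t ≤ (j : Sd) := ML c ht hevj hchj
        have heq1 : y (j+1) t = y j t := (L_key1 c htIcc hle).symm
        have hval' : y (j+1) t = y k t := heq1.trans hval
        refine ⟨hval', fun Λ' hev' hne => ?_⟩
        -- Λ' = y (j+1) t = y k t ≤ k ≤ j
        have hΛ'le : (Λ' : Sd) ≤ (j : Sd) := by
          rw [hne, hval']
          exact le_trans hck (by exact_mod_cast Nat.cast_le.2 hge)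
        have hevj' : ∀ᶠ w in lf T t, y j w = (Λ' : Sd) := by
          filter_upwards [hev', eventually_mem_lf] with w h1 h2
          rw [← h1]
          exact L_key1 c h2.1 (h1 ▸ hΛ'le)
        exact hwin Λ' hevj' (by rw [hne, hval', ← hval])
  apply le_antisymm
  · apply iSup_le
    intro j
    rcases le_total j k with h' | h'
    · exact L_mono c htIcc h'
    · exact le_of_eq (hstep j h').1
  · exact le_limY k

/-! ### membership in the soft space -/

lemma L_right (c : Ctx T y) {t : ℝ} (ht : t ∈ Icc 0 T) : softRightCont T (limY y) t := by
  rcases eq_or_lt_of_le ht.2 with heq | hlt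
  · left
    rw [rightLim, rf, heq]
    have hE : Icc 0 T ∩ Ioi T = ∅ := by
      ext s; simp only [mem_inter_iff, mem_Icc, mem_Ioi, mem_empty_iff_false, iff_false]
      rintro ⟨⟨_, h1⟩, h2⟩; exact absurd h1 (not_le.2 h2)
    rw [hE, nhdsWithin_empty]
    exact tendsto_bot
  · by_cases htop : limY y t = ⊤
    · left
      rw [rightLim]
      refine ENat.tendsto_nhds_top_iff_natCast_lt.2 fun n => ?_
      obtain ⟨k, hk⟩ := L_unbounded c htop n
      filter_upwards [L_rc c k ⟨ht.1, hlt⟩] with w hw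
      exact lt_of_lt_of_le hk (hw ▸ le_limY k)
    · obtain ⟨n, hn⟩ : ∃ n : ℕ, limY y t = (n : Sd) :=
        ⟨(limY y t).toNat, (ENat.coe_toNat htop).symm⟩
      have hk : ∀ K : ℕ, ∀ᶠ w in rf T t, limY y w = (n : Sd) ∨ (K : Sd) < limY y w := by
        intro K
        have hkt : y (max K n) t = (n : Sd) := by
          rw [← hn]
          exact L_FVL c ht (hn ▸ (by exact_mod_cast Nat.cast_le.2 (le_max_right K n)))
        filter_upwards [L_rc c (max K n) ⟨ht.1, hlt⟩, eventually_mem_rf] with w h1 h2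
        by_cases hw : limY y w ≤ ((max K n : ℕ) : Sd)
        · left; rw [← L_FVL c h2.1 hw, h1, hkt]
        · right
          exact lt_of_le_of_lt (by exact_mod_cast Nat.cast_le.2 (le_max_left K n))
            (lt_of_not_ge hw)
      rcases TRI hk with h | h | ⟨hpair, -⟩
      · exact Or.inr (Or.inl ⟨n, h, hn⟩)
      · exact Or.inl h
      · exact Or.inr (Or.inr ⟨n, hpair, hn⟩)

lemma L_left (c : Ctx T y) {t : ℝ} (ht : t ∈ Ioc 0 T) : softLeftLim T (limY y) t := by
  have hNB := lf_neBot ht.1 ht.2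
  have hlc := fun k => L_lc c k ht
  set Λ : ℕ → ℕ := fun k => (hlc k).choose with hΛ
  have hspec : ∀ k, ((Λ k : Sd) ≤ (k : Sd)) ∧ ∀ᶠ w in lf T t, y k w = (Λ k : Sd) :=
    fun k => (hlc k).choose_spec
  have hmono : Monotone Λ := by
    apply monotone_nat_of_le_succ
    intro k
    obtain ⟨w, ⟨e1, e2⟩, hw⟩ :=
      (((hspec k).2.and (hspec (k+1)).2).and eventually_mem_lf).exists
    have hm : y k w ≤ y (k+1) w := L_mono c hw.1 (Nat.le_succ k)
    rw [e1, e2] at hm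
    exact_mod_cast hm
  by_cases hub : ∀ M : ℕ, ∃ k, M < Λ k
  · left
    refine ⟨⊤, ?_⟩
    rw [leftLim]
    refine ENat.tendsto_nhds_top_iff_natCast_lt.2 fun M => ?_
    obtain ⟨k, hk⟩ := hub M
    filter_upwards [(hspec k).2] with w hw
    have h1 : ((M : ℕ) : Sd) < (Λ k : Sd) := by exact_mod_cast hk
    exact lt_of_lt_of_le h1 (by rw [← hw]; exact le_limY k)
  · push_neg at hub
    obtain ⟨M, hM⟩ := hub
    have hstab : ∃ k0, ∀ k, k0 ≤ k → Λ k = Λ k0 := by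
      by_contra hc
      push_neg at hc
      have grow : ∀ j : ℕ, ∃ k, j ≤ Λ k := by
        intro j
        induction j with
        | zero => exact ⟨0, Nat.zero_le _⟩
        | succ j ih =>
          obtain ⟨k, hk⟩ := ih
          obtain ⟨k', hk'1, hk'2⟩ := hc k
          have : Λ k < Λ k' := lt_of_le_of_ne (hmono hk'1) (Ne.symm hk'2)
          exact ⟨k', by omega⟩
      obtain ⟨k, hk⟩ := grow (M + 1)
      exact absurd (hM k) (by omega)
    obtain ⟨k0, hk0⟩ := hstab
    set n := Λ k0 with hn
    have hk : ∀ K : ℕ, ∀ᶠ w in lf T t, limY y w = (n : Sd) ∨ (K : Sd) < limY y w := by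
      intro K
      have hΛk' : Λ (max K k0) = n := hk0 (max K k0) (le_max_right K k0)
      filter_upwards [(hspec (max K k0)).2, eventually_mem_lf] with w h1 h2
      by_cases hw : limY y w ≤ ((max K k0 : ℕ) : Sd)
      · left
        rw [← L_FVL c h2.1 hw, h1]
        exact_mod_cast hΛk'
      · right
        exact lt_of_le_of_lt (by exact_mod_cast Nat.cast_le.2 (le_max_left K k0))
          (lt_of_not_ge hw)
    rcases TRI hk with h | h | ⟨hpair, -⟩
    · exact Or.inl ⟨(n : Sd), h⟩
    · exact Or.inl ⟨⊤, h⟩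
    · exact Or.inr ⟨n, hpair⟩

lemma L_Y0 (c : Ctx T y) : limY y 0 ≠ ⊤ := by
  intro h
  have h0 : (0:ℝ) ∈ Icc 0 T := ⟨le_refl 0, c.hT.le⟩
  obtain ⟨k, hk1, hk2⟩ := L_ceil c h0 h 1
  obtain ⟨k', hk'1, hk'2⟩ := L_ceil c h0 h (k+2)
  have hz : y k' 0 = 0 := by
    rw [← c.hcomp k' h0, Rm]
    apply srec_of_not_exists
    rintro ⟨s, hs, hP⟩
    have hs0 : s = 0 := le_antisymm hs.2 hs.1
    rw [hs0, hk'2] at hP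
    exact absurd hP (by exact_mod_cast Nat.not_succ_le_self k')
  have hle : y (k+1) 0 ≤ y k' 0 := L_mono c h0 (by omega : k+1 ≤ k')
  rw [hk2, hz] at hle
  have : (k + 1 : ℕ) ≤ 0 := by exact_mod_cast hle
  omega

lemma L_top_entry (c : Ctx T y) {t : ℝ} (ht : t ∈ Ioc 0 T) (htop : limY y t = ⊤) :
    0 < sigmaInf (limY y) t ∧ limY y (sigmaInf (limY y) t) = ⊤ ∧
      leftLim T (limY y) (sigmaInf (limY y) t) ⊤ := by
  set σ := sigmaInf (limY y) t with hσdef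
  have hσlv : σ = lastVisit (fun k => k ≠ ⊤) (limY y) t := rfl
  have hne : ∃ s ∈ Icc 0 t, (limY y s ≠ ⊤) := ⟨0, ⟨le_refl 0, ht.1.le⟩, L_Y0 c⟩
  have hσt : σ ≤ t := lastVisit_le hne
  have hσ0 : 0 ≤ σ := lastVisit_nonneg hne
  have habove : ∀ w, σ < w → w ≤ t → 0 ≤ w → limY y w = ⊤ := by
    intro w h1 h2 h0
    by_contra hw
    exact absurd (visit_le_lastVisit (P := fun k => k ≠ ⊤) ⟨h0, h2⟩ hw) (not_le.2 h1)
  have htIcc : t ∈ Icc 0 T := ⟨le_of_lt ht.1, ht.2⟩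
  have hσtop : limY y σ = ⊤ := by
    by_contra hσn
    have hσlt : σ < t := lt_of_le_of_ne hσt (fun h => hσn (h ▸ htop))
    have hσIcc : σ ∈ Icc 0 T := ⟨hσ0, le_trans hσt ht.2⟩
    obtain ⟨n, hn⟩ : ∃ n : ℕ, limY y σ = (n : Sd) :=
      ⟨(limY y σ).toNat, (ENat.coe_toNat hσn).symm⟩
    obtain ⟨m, hm1, hm2⟩ := L_ceil c htIcc htop n
    have hyn : y (m+1) σ = (n : Sd) := by
      rw [← hn]
      exact L_FVL c hσIcc (hn ▸ (by exact_mod_cast Nat.cast_le.2 (by omega : n ≤ m + 1)))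
    set A := {w | w ∈ Icc σ t ∧ y (m+1) w ≠ ((m+1 : ℕ) : Sd)} with hA
    have hσA : σ ∈ A := by
      refine ⟨⟨le_refl σ, hσt⟩, ?_⟩
      rw [hyn]
      intro hcast
      have : n = m + 1 := by exact_mod_cast hcast
      omega
    have hAbdd : ∀ w ∈ A, w ≤ t := fun w hw => hw.1.2
    set a := sSup A with ha
    have haA1 : σ ≤ a := le_csSup ⟨t, hAbdd⟩ hσA
    have hat : a ≤ t := csSup_le ⟨σ, hσA⟩ hAbdd
    have ha0 : 0 ≤ a := le_trans hσ0 haA1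
    have hva : y (m+1) a = ((m+1 : ℕ) : Sd) := by
      by_contra hva
      have halt : a < t := lt_of_le_of_ne hat (fun h => hva (h ▸ hm2))
      have hrc := L_rc c (m+1) ⟨ha0, lt_of_lt_of_le halt ht.2⟩
      haveI := rf_neBot ha0 (lt_of_lt_of_le halt ht.2)
      obtain ⟨w, ⟨e1, e2⟩, hw⟩ := ((hrc.and (eventually_lt_rf halt)).and eventually_mem_rf).exists
      have hwA : w ∈ A := ⟨⟨le_trans haA1 (le_of_lt hw.2), le_of_lt e2⟩, by rw [e1]; exact hva⟩
      exact absurd (le_csSup ⟨t, hAbdd⟩ hwA) (not_le.2 hw.2)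
    have haσ : σ < a := by
      refine lt_of_le_of_ne haA1 (fun h => ?_)
      rw [← h, hyn] at hva
      have : n = m + 1 := by exact_mod_cast hva
      omega
    have hanA : a ∉ A := fun hmem => hmem.2 hva
    have hfa : ∃ᶠ w in lf T a, w ∈ A := by
      refine freq_lf_of_csSup ⟨σ, hσA⟩ ?_ (fun w hw => le_csSup ⟨t, hAbdd⟩ hw) rfl hanA
      exact fun w hw => ⟨le_trans hσ0 hw.1.1, le_trans hw.1.2 ht.2⟩
    have haIoc : a ∈ Ioc 0 T := ⟨lt_of_le_of_lt hσ0 haσ, le_trans hat ht.2⟩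
    obtain ⟨Λ, hΛle, hevΛ⟩ := L_lc c (m+1) haIoc
    obtain ⟨w, hw1, hw2⟩ := (hfa.and_eventually hevΛ).exists
    have hΛne : (Λ : Sd) ≠ ((m+1 : ℕ) : Sd) := by rw [← hw2]; exact hw1.2
    have hMs := Mstar c haIoc hevΛ (by rw [hva]; exact fun h => hΛne h.symm)
    rw [hva] at hMs
    have := habove a haσ hat ha0
    rw [this] at hMs
    exact ENat.coe_ne_top (m+1) hMs.symm
  have hσpos : 0 < σ := by
    rcases lt_or_eq_of_le hσ0 with h | h
    · exact h
    · exact absurd (h ▸ hσtop) (L_Y0 c)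
  refine ⟨hσpos, hσtop, ?_⟩
  rw [leftLim]
  have hσIoc : σ ∈ Ioc 0 T := ⟨hσpos, le_trans hσt ht.2⟩
  have hNB := lf_neBot hσpos hσIoc.2
  refine ENat.tendsto_nhds_top_iff_natCast_lt.2 fun M => ?_
  by_contra hev
  rw [not_eventually] at hev
  have hfreq : ∃ᶠ w in lf T σ, limY y w ≤ (M : Sd) := hev.mono fun w hw => not_lt.1 hw
  obtain ⟨K, hK1, hK2⟩ := L_ceil c ⟨hσ0, hσIoc.2⟩ hσtop (M+1)
  obtain ⟨Λ, hΛle, hevΛ⟩ := L_lc c (K+1) hσIoc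
  obtain ⟨w, hw1, hw2⟩ := (hfreq.and_eventually hevΛ).exists
  have hΛM : (Λ : Sd) ≤ (M : Sd) := by rw [← hw2]; exact le_trans (le_limY (K+1)) hw1
  have hch : y (K+1) σ ≠ (Λ : Sd) := by
    rw [hK2]
    intro h
    have : (K + 1 : ℕ) ≤ M := by exact_mod_cast (h ▸ hΛM)
    omega
  have hMs := Mstar c hσIoc hevΛ hch
  rw [hσtop, hK2] at hMs
  exact ENat.coe_ne_top (K+1) hMs.symm

/-! ### constancy of the low record while `limY` stays high -/

/-- if `limY` stays strictly above `m` on `(σ', v]` then `y (m+1)` cannot exit and re-enter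
`S_m` there -/
lemma L_noexit (c : Ctx T y) {m : ℕ} {σ' v t u₀ : ℝ} (hv : v ∈ Icc 0 t) (htT : t ≤ T)
    (hσ'0 : 0 ≤ σ')
    (hw : ∀ w, σ' < w → w ≤ v → ¬ (limY y w ≤ (m : Sd)))
    (hvP : y (m+1) v ≤ (m : Sd))
    (hu : u₀ ∈ Icc σ' v) (hu2 : ¬ (y (m+1) u₀ ≤ (m : Sd)))
    (hcase : y (m+1) σ' ≤ (m : Sd) ∨ u₀ = σ') : False := by
  set E := {u | u ∈ Icc σ' v ∧ ¬ (y (m+1) u ≤ (m : Sd))} with hE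
  have hu₀E : u₀ ∈ E := ⟨hu, hu2⟩
  have hEne : E.Nonempty := ⟨u₀, hu₀E⟩
  have hEbdd : ∀ u ∈ E, u ≤ v := fun u hu' => hu'.1.2
  set w' := sSup E with hw'
  have hw'le : w' ≤ v := csSup_le hEne hEbdd
  have hw'ge : σ' ≤ w' := le_trans hu.1 (le_csSup ⟨v, hEbdd⟩ hu₀E)
  have hvt : v ≤ T := le_trans hv.2 htT
  by_cases hxw : y (m+1) w' ≤ (m : Sd)
  · have hw'notE : w' ∉ E := fun h => h.2 hxw
    have hw'σ : σ' < w' := by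
      rcases hcase with h | h
      · have h1 : σ' < u₀ := lt_of_le_of_ne hu.1 (fun he => hu2 (he ▸ h))
        exact lt_of_lt_of_le h1 (le_csSup ⟨v, hEbdd⟩ hu₀E)
      · exact lt_of_le_of_ne hw'ge (fun he => hw'notE (he ▸ (h ▸ hu₀E)))
    have hfa : ∃ᶠ u in lf T w', u ∈ E := freq_lf_of_csSup hEne
        (fun u hu' => ⟨le_trans hσ'0 hu'.1.1, le_trans hu'.1.2 hvt⟩)
        (fun u hu' => le_csSup ⟨v, hEbdd⟩ hu') rfl hw'notE
    have hw'Ioc : w' ∈ Ioc 0 T := ⟨lt_of_le_of_lt hσ'0 hw'σ, le_trans hw'le hvt⟩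
    obtain ⟨Λ, hΛle, hevΛ⟩ := L_lc c (m+1) hw'Ioc
    obtain ⟨u, hu', he⟩ := (hfa.and_eventually hevΛ).exists
    have hΛgt : ¬ ((Λ : Sd) ≤ (m : Sd)) := by rw [← he]; exact hu'.2
    have hch : y (m+1) w' ≠ (Λ : Sd) := fun h => hΛgt (h ▸ hxw)
    have hMs := Mstar c hw'Ioc hevΛ hch
    exact hw w' hw'σ hw'le (by rw [hMs]; exact hxw)
  · have hw'v : w' < v := lt_of_le_of_ne hw'le (fun h => hxw (h ▸ hvP))
    haveI := rf_neBot (le_trans hσ'0 hw'ge) (lt_of_lt_of_le hw'v hvt)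
    have hrc := L_rc c (m+1) ⟨le_trans hσ'0 hw'ge, lt_of_lt_of_le hw'v hvt⟩
    obtain ⟨u, ⟨e1, e2⟩, hmem⟩ :=
      ((hrc.and (eventually_lt_rf hw'v)).and eventually_mem_rf).exists
    have huE : u ∈ E := ⟨⟨le_trans hw'ge (le_of_lt hmem.2), le_of_lt e2⟩,
      by rw [e1]; exact hxw⟩
    exact absurd (le_csSup ⟨v, hEbdd⟩ huE) (not_le.2 hmem.2)

/-- constancy of `y (m+1)` on `[σ', v]` while `limY` stays strictly above `m` on `(σ', v]` -/
lemma L_cst (c : Ctx T y) {m : ℕ} {σ' v t : ℝ} (hv : v ∈ Icc 0 t) (htT : t ≤ T)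
    (hσ'0 : 0 ≤ σ') (hσ'v : σ' ≤ v)
    (hw : ∀ w, σ' < w → w ≤ v → ¬ (limY y w ≤ (m : Sd)))
    (hσP : y (m+1) σ' ≤ (m : Sd)) (hvP : y (m+1) v ≤ (m : Sd)) :
    y (m+1) v = y (m+1) σ' := by
  have hvt : v ≤ T := le_trans hv.2 htT
  have hE : ∀ u, σ' ≤ u → u ≤ v → y (m+1) u ≤ (m : Sd) := by
    intro u h1 h2
    by_contra hcon
    exact L_noexit c hv htT hσ'0 hw hvP ⟨h1, h2⟩ hcon (Or.inl hσP)
  by_contra hne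
  set A := {u | u ∈ Icc σ' v ∧ y (m+1) u ≠ y (m+1) σ'} with hA
  have hAne : A.Nonempty := ⟨v, ⟨hσ'v, le_refl v⟩, hne⟩
  have hAbdd : BddBelow A := ⟨σ', fun u hu => hu.1.1⟩
  set b := sInf A with hb
  have hbσ : σ' ≤ b := le_csInf hAne (fun u hu => hu.1.1)
  have hbv : b ≤ v := csInf_le hAbdd ⟨⟨hσ'v, le_refl v⟩, hne⟩
  have hb0 : 0 ≤ b := le_trans hσ'0 hbσ
  have hbT : b ≤ T := le_trans hbv hvt
  have hbefore : ∀ u, σ' ≤ u → u < b → y (m+1) u = y (m+1) σ' := by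
    intro u h1 h2
    by_contra hc
    exact absurd (csInf_le hAbdd ⟨⟨h1, le_trans (le_of_lt h2) hbv⟩, hc⟩) (not_le.2 h2)
  have hxb : y (m+1) b ≠ y (m+1) σ' := by
    intro hxbeq
    have hbA : b ∉ A := fun h => h.2 hxbeq
    have hbltT : b < T := by
      rcases lt_or_eq_of_le hbT with h | h
      · exact h
      · exfalso
        obtain ⟨u, hu⟩ := hAne
        have h1 : b ≤ u := csInf_le hAbdd hu
        have h2 : u ≤ b := by rw [h]; exact le_trans hu.1.2 hvt
        exact hbA ((le_antisymm h2 h1) ▸ hu)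
    haveI := rf_neBot hb0 hbltT
    have hrc := L_rc c (m+1) ⟨hb0, hbltT⟩
    have hfa : ∃ᶠ u in rf T b, u ∈ A := freq_rf_of_csInf hAne
        (fun u hu => ⟨le_trans hσ'0 hu.1.1, le_trans hu.1.2 hvt⟩)
        (fun u hu => csInf_le hAbdd hu) rfl hbA
    obtain ⟨u, huA, he⟩ := (hfa.and_eventually hrc).exists
    exact huA.2 (by rw [he, hxbeq])
  have hbσ' : σ' < b := lt_of_le_of_ne hbσ (fun h => hxb (by rw [← h]))
  have hbIoc : b ∈ Ioc 0 T := ⟨lt_of_le_of_lt hσ'0 hbσ', hbT⟩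
  obtain ⟨Λ, hΛle, hevΛ⟩ := L_lc c (m+1) hbIoc
  haveI := lf_neBot hbIoc.1 hbIoc.2
  obtain ⟨u, ⟨e1, e2⟩, hmem⟩ :=
    ((hevΛ.and (eventually_gt_lf hbσ')).and eventually_mem_lf).exists
  have hΛeq : (Λ : Sd) = y (m+1) σ' := by
    rw [← e1]
    exact hbefore u (le_of_lt e2) hmem.2
  have hch : y (m+1) b ≠ (Λ : Sd) := by rw [hΛeq]; exact hxb
  have hMs := Mstar c hbIoc hevΛ hch
  exact hw b hbσ' hbv (by rw [hMs]; exact hE b hbσ hbv)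

/-! ### the record identity `R_m (lim Y) = y m` -/

lemma L_C (c : Ctx T y) (m : ℕ) {t : ℝ} (ht : t ∈ Icc 0 T) :
    Rm T m (limY y) t = y m t := by
  rw [← c.hcomp m ht, Rm, Rm]
  have hsubT : ∀ s, s ∈ Icc 0 t → s ∈ Icc 0 T := fun s hs => ⟨hs.1, le_trans hs.2 ht.2⟩
  have hWV : ∀ s ∈ Icc 0 t, limY y s ≤ (m : Sd) → y (m+1) s = limY y s := fun s hs h =>
    L_FVL c (hsubT s hs) (le_trans h (by exact_mod_cast Nat.le_succ m))
  by_cases hW : ∃ s ∈ Icc 0 t, (fun v => v ≤ (m : Sd)) (limY y s)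
  · -- W nonempty
    have hσt : lastVisit (fun v => v ≤ (m : Sd)) (limY y) t ≤ t := lastVisit_le hW
    have hσ0 : 0 ≤ lastVisit (fun v => v ≤ (m : Sd)) (limY y) t := lastVisit_nonneg hW
    set σ := lastVisit (fun v => v ≤ (m : Sd)) (limY y) t with hσdef
    have hnoW : ∀ w, σ < w → w ≤ t → ¬ (limY y w ≤ (m : Sd)) := fun w h1 h2 hc =>
      absurd (visit_le_lastVisit (P := fun v => v ≤ (m : Sd))
        ⟨le_trans hσ0 (le_of_lt h1), h2⟩ hc) (not_le.2 h1)
    have hV : ∃ s ∈ Icc 0 t, (fun v => v ≤ (m : Sd)) (y (m+1) s) := by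
      obtain ⟨s, hs, hPs⟩ := hW
      exact ⟨s, hs, by rw [hWV s hs hPs]; exact hPs⟩
    have hτt : lastVisit (fun v => v ≤ (m : Sd)) (y (m+1)) t ≤ t := lastVisit_le hV
    set τ := lastVisit (fun v => v ≤ (m : Sd)) (y (m+1)) t with hτdef
    have hστ : σ ≤ τ := by
      apply csSup_le (by obtain ⟨s, hs, hPs⟩ := hW; exact ⟨s, hs, hPs⟩)
      intro s hs
      exact visit_le_lastVisit hs.1 (by rw [hWV s hs.1 hs.2]; exact hs.2)
    by_cases hYσ : limY y σ ≤ (m : Sd)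
    · -- Sub A : the last visit time of `limY` is a genuine visit
      have hLHS : srec T (fun v => v ≤ (m : Sd)) (limY y) t = limY y σ :=
        srec_of_visit hW hσdef.symm hYσ
      have hxσ : y (m+1) σ = limY y σ := hWV σ ⟨hσ0, hσt⟩ hYσ
      have hclaim : ∀ v, σ < v → v ∈ Icc 0 t → y (m+1) v ≤ (m : Sd) →
          y (m+1) v = y (m+1) σ := by
        intro v h1 h2 h3
        exact L_cst c h2 ht.2 hσ0 (le_of_lt h1)
          (fun w hw1 hw2 => hnoW w hw1 (le_trans hw2 h2.2))
          (by rw [hxσ]; exact hYσ) h3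
      rw [hLHS]
      by_cases hPτ : y (m+1) τ ≤ (m : Sd)
      · rw [srec_of_visit (P := fun v => v ≤ (m : Sd)) hV hτdef.symm hPτ]
        rcases lt_or_eq_of_le hστ with h | h
        · rw [hclaim τ h ⟨le_trans hσ0 hστ, hτt⟩ hPτ, hxσ]
        · rw [← h, hxσ]
      · have hστ' : σ < τ := lt_of_le_of_ne hστ
          (fun h => hPτ (by rw [← h, hxσ]; exact hYσ))
        have hτ0 : 0 < τ := lt_of_le_of_lt hσ0 hστ'
        have hτT : τ ≤ T := le_trans hτt ht.2
        haveI := lf_neBot hτ0 hτT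
        obtain ⟨Λτ, _, hevΛτ⟩ := L_lc c (m+1) ⟨hτ0, hτT⟩
        have hPτ' : ¬ (fun v => v ≤ (m : Sd))
            (y (m+1) (lastVisit (fun v => v ≤ (m : Sd)) (y (m+1)) t)) := by
          rw [← hτdef]; exact hPτ
        have hfs := freq_visit_lf (P := fun v => v ≤ (m : Sd)) (x := y (m+1)) hV ht.2 hPτ'
        rw [← hτdef] at hfs
        obtain ⟨w, hw1, ⟨hwe, hwgt⟩, hwmem, hwlt⟩ :=
          (hfs.and_eventually ((hevΛτ.and (eventually_gt_lf hστ')).and eventually_mem_lf)).exists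
        have hwIcc : w ∈ Icc 0 t := ⟨hwmem.1, le_trans (le_of_lt hwlt) hτt⟩
        have hΛval : (Λτ : Sd) = y (m+1) σ := by
          rw [← hwe]; exact hclaim w hwgt hwIcc hw1
        rw [srec_of_cluster (P := fun v => v ≤ (m : Sd)) hV hτdef.symm hPτ hτ0 hτT
          (fun k => hevΛτ.mono fun u hu => Or.inl hu) hevΛτ.frequently, hΛval, hxσ]
    · -- Sub B : `limY` at `σ` is strictly above `m`
      have hσpos : 0 < σ := by
        rcases lt_or_eq_of_le hσ0 with h | h
        · exact h
        · exfalso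
          obtain ⟨s, hs, hPs⟩ := hW
          have h1 : s ≤ σ := visit_le_lastVisit hs hPs
          have h2 : s = 0 := le_antisymm (by rw [← h] at h1; exact h1) hs.1
          rw [h2] at hPs
          rw [← h] at hYσ
          exact hYσ hPs
      have hσT : σ ≤ T := le_trans hσt ht.2
      have hσIoc : σ ∈ Ioc 0 T := ⟨hσpos, hσT⟩
      haveI := lf_neBot hσpos hσT
      have hYσ' : ¬ (fun v => v ≤ (m : Sd))
          (limY y (lastVisit (fun v => v ≤ (m : Sd)) (limY y) t)) := by
        rw [← hσdef]; exact hYσ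
      have hfw : ∃ᶠ w in lf T σ, limY y w ≤ (m : Sd) := by
        have h := freq_visit_lf (P := fun v => v ≤ (m : Sd)) (x := limY y) hW ht.2 hYσ'
        rw [← hσdef] at h
        exact h
      obtain ⟨Λ, hΛle, hevΛ⟩ := L_lc c (m+1) hσIoc
      have hfreqY : ∃ᶠ w in lf T σ, limY y w = (Λ : Sd) := by
        apply (hfw.and_eventually (hevΛ.and eventually_mem_lf)).mono
        rintro w ⟨hPw, he, hmem, hmlt⟩
        have hIcc : w ∈ Icc 0 t := ⟨hmem.1, le_trans (le_of_lt hmlt) hσt⟩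
        rw [← hWV w hIcc hPw, he]
      have hΛm : (Λ : Sd) ≤ (m : Sd) := by
        obtain ⟨w, hw1, he, hmem, hmlt⟩ := (hfw.and_eventually (hevΛ.and eventually_mem_lf)).exists
        have hIcc : w ∈ Icc 0 t := ⟨hmem.1, le_trans (le_of_lt hmlt) hσt⟩
        rw [← (by rw [← hWV w hIcc hw1, he] : limY y w = (Λ : Sd))]
        exact hw1
      have htriY : ∀ K : ℕ, ∀ᶠ w in lf T σ,
          limY y w = (Λ : Sd) ∨ (K : Sd) < limY y w := by
        intro K
        obtain ⟨Λ', hΛ'le, hevΛ'⟩ := L_lc c (max K (m+1)) hσIoc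
        have hΛ'm : (Λ' : Sd) ≤ (m : Sd) := by
          obtain ⟨w, hw1, he, hmem, hmlt⟩ :=
            (hfw.and_eventually (hevΛ'.and eventually_mem_lf)).exists
          have hYw : y (max K (m+1)) w = limY y w := L_FVL c hmem
            (le_trans hw1 (by exact_mod_cast le_trans (Nat.le_succ m) (le_max_right K (m+1))))
          rw [← he, hYw]
          exact hw1
        filter_upwards [hevΛ', hevΛ, eventually_mem_lf] with w h1 h2 hmem
        by_cases hY : limY y w ≤ ((max K (m+1) : ℕ) : Sd)
        · left
          have hYw : limY y w = (Λ' : Sd) := by rw [← L_FVL c hmem.1 hY, h1]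
          have hYwm : limY y w ≤ (m : Sd) := hYw ▸ hΛ'm
          have hIcc : w ∈ Icc 0 t := ⟨hmem.1.1, le_trans (le_of_lt hmem.2) hσt⟩

          rw [← hWV w hIcc hYwm, h2]
        · right
          exact lt_of_le_of_lt (by exact_mod_cast Nat.cast_le.2 (le_max_left K (m+1)))
            (lt_of_not_ge hY)
      have hLHS : srec T (fun v => v ≤ (m : Sd)) (limY y) t = (Λ : Sd) :=
        srec_of_cluster hW hσdef.symm hYσ hσpos hσT htriY hfreqY
      rw [hLHS]
      by_cases hxσ : y (m+1) σ ≤ (m : Sd)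
      · -- B1
        have hxσΛ : y (m+1) σ = (Λ : Sd) := by
          by_contra hch
          have hMs := Mstar c hσIoc hevΛ hch
          exact hYσ (by rw [hMs]; exact hxσ)
        have hclaim : ∀ v, σ < v → v ∈ Icc 0 t → y (m+1) v ≤ (m : Sd) →
            y (m+1) v = y (m+1) σ := by
          intro v h1 h2 h3
          exact L_cst c h2 ht.2 hσ0 (le_of_lt h1)
            (fun w hw1 hw2 => hnoW w hw1 (le_trans hw2 h2.2)) hxσ h3
        by_cases hPτ : y (m+1) τ ≤ (m : Sd)
        · rw [srec_of_visit (P := fun v => v ≤ (m : Sd)) hV hτdef.symm hPτ]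
          rcases lt_or_eq_of_le hστ with h | h
          · rw [hclaim τ h ⟨le_trans hσ0 hστ, hτt⟩ hPτ, hxσΛ]
          · rw [← h, hxσΛ]
        · have hστ' : σ < τ := lt_of_le_of_ne hστ
            (fun h => hPτ (by rw [← h]; exact hxσ))
          have hτ0 : 0 < τ := lt_of_le_of_lt hσ0 hστ'
          have hτT : τ ≤ T := le_trans hτt ht.2
          haveI := lf_neBot hτ0 hτT
          obtain ⟨Λτ, _, hevΛτ⟩ := L_lc c (m+1) ⟨hτ0, hτT⟩
          have hPτ' : ¬ (fun v => v ≤ (m : Sd))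
              (y (m+1) (lastVisit (fun v => v ≤ (m : Sd)) (y (m+1)) t)) := by
            rw [← hτdef]; exact hPτ
          have hfs := freq_visit_lf (P := fun v => v ≤ (m : Sd)) (x := y (m+1)) hV ht.2 hPτ'
          rw [← hτdef] at hfs
          obtain ⟨w, hw1, ⟨hwe, hwgt⟩, hwmem, hwlt⟩ :=
            (hfs.and_eventually
              ((hevΛτ.and (eventually_gt_lf hστ')).and eventually_mem_lf)).exists
          have hwIcc : w ∈ Icc 0 t := ⟨hwmem.1, le_trans (le_of_lt hwlt) hτt⟩
          have hΛval : (Λτ : Sd) = y (m+1) σ := by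
            rw [← hwe]; exact hclaim w hwgt hwIcc hw1
          rw [srec_of_cluster (P := fun v => v ≤ (m : Sd)) hV hτdef.symm hPτ hτ0 hτT
            (fun k => hevΛτ.mono fun u hu => Or.inl hu) hevΛτ.frequently, hΛval, hxσΛ]
      · -- B2 : no visit of `y (m+1)` to `S_m` after `σ`, and `τ = σ`
        have hτσ : τ = σ := by
          apply le_antisymm ?_ hστ
          apply csSup_le (by obtain ⟨s, hs, hPs⟩ := hV; exact ⟨s, hs, hPs⟩)
          intro v hv
          by_contra hgt
          push_neg at hgt
          exact L_noexit c hv.1 ht.2 hσ0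
            (fun w hw1 hw2 => hnoW w hw1 (le_trans hw2 hv.1.2)) hv.2
            ⟨le_refl σ, le_of_lt hgt⟩ hxσ (Or.inr rfl)
        rw [srec_of_cluster (P := fun v => v ≤ (m : Sd)) hV (hτdef.symm.trans hτσ) hxσ hσpos hσT
          (fun k => hevΛ.mono fun u hu => Or.inl hu) hevΛ.frequently]
  · -- W empty
    rw [srec_of_not_exists (P := fun v => v ≤ (m : Sd)) hW]
    have hα : ∀ v ∈ Icc 0 t, y (m+1) v ≤ (m : Sd) → y (m+1) v = 0 := by
      intro v hv hPv
      by_cases hA : ∃ s, s ∈ Icc 0 v ∧ y (m+1) s ≠ y (m+1) v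
      · -- a change happened before v : Mstar pins `limY` low, contradicting `W = ∅`
        exfalso
        obtain ⟨u₀, hu₀⟩ := hA
        set A := {s | s ∈ Icc 0 v ∧ y (m+1) s ≠ y (m+1) v} with hA'
        have hAbdd : ∀ u ∈ A, u ≤ v := fun u hu => hu.1.2
        set e := sSup A with he
        have hev_ : e ≤ v := csSup_le ⟨u₀, hu₀⟩ hAbdd
        have he0 : 0 ≤ e := le_trans hu₀.1.1 (le_csSup ⟨v, hAbdd⟩ hu₀)
        have hvT : v ≤ T := le_trans hv.2 ht.2
        have hxe : y (m+1) e = y (m+1) v := by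
          by_contra hxe
          have heA : e ∈ A := ⟨⟨he0, hev_⟩, hxe⟩
          have helt : e < v := lt_of_le_of_ne hev_ (fun h => hxe (by rw [h]))
          haveI := rf_neBot he0 (lt_of_lt_of_le helt hvT)
          have hrc := L_rc c (m+1) ⟨he0, lt_of_lt_of_le helt hvT⟩
          obtain ⟨u, ⟨e1, e2⟩, hmem⟩ :=
            ((hrc.and (eventually_lt_rf helt)).and eventually_mem_rf).exists
          have huA : u ∈ A := ⟨⟨le_trans he0 (le_of_lt hmem.2), le_of_lt e2⟩,
            by rw [e1]; exact hxe⟩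
          exact absurd (le_csSup ⟨v, hAbdd⟩ huA) (not_le.2 hmem.2)
        have henA : e ∉ A := fun h => h.2 hxe
        have hepos : 0 < e := by
          rcases lt_or_eq_of_le he0 with h | h
          · exact h
          · exfalso
            have h1 : u₀ ≤ e := le_csSup ⟨v, hAbdd⟩ hu₀
            have h2 : u₀ = 0 := le_antisymm (by rw [h]; exact h1) hu₀.1.1
            exact henA (by rw [← h]; exact h2 ▸ hu₀)
        have heIoc : e ∈ Ioc 0 T := ⟨hepos, le_trans hev_ hvT⟩
        haveI := lf_neBot hepos heIoc.2
        obtain ⟨Λ, hΛle, hevΛ⟩ := L_lc c (m+1) heIoc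
        have hfa : ∃ᶠ u in lf T e, u ∈ A := freq_lf_of_csSup ⟨u₀, hu₀⟩
          (fun u hu => ⟨hu.1.1, le_trans hu.1.2 hvT⟩)
          (fun u hu => le_csSup ⟨v, hAbdd⟩ hu) rfl henA
        obtain ⟨u, huA, heu⟩ := (hfa.and_eventually hevΛ).exists
        have hΛne : (Λ : Sd) ≠ y (m+1) v := by rw [← heu]; exact huA.2
        have hch : y (m+1) e ≠ (Λ : Sd) := by rw [hxe]; exact fun h => hΛne h.symm
        have hMs := Mstar c heIoc hevΛ hch
        refine hW ⟨e, ⟨he0, le_trans hev_ hv.2⟩, ?_⟩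
        rw [hMs, hxe]
        exact hPv
      · -- `y (m+1)` is constant on `[0, v]`; propagate the value upward at time `0`
        push_neg at hA
        by_contra hv0
        have h0Icc : (0:ℝ) ∈ Icc 0 T := ⟨le_refl 0, c.hT.le⟩
        have hx0 : y (m+1) 0 = y (m+1) v := hA 0 ⟨le_refl 0, hv.1⟩
        have hup : ∀ j, m+1 ≤ j → y j 0 = y (m+1) v := by
          intro j hj
          induction j with
          | zero => exact absurd hj (by omega)
          | succ j ih =>
            rcases Nat.lt_or_ge j (m+1) with hlt | hge
            · have hje : m + 1 = j + 1 := by omega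
              rw [← hje]
              exact hx0
            · have hyj := ih hge
              by_cases hc' : y (j+1) 0 ≤ (j : Sd)
              · rw [← L_key1 c h0Icc hc', hyj]
              · exfalso
                have hz : y j 0 = 0 := by
                  rw [← c.hcomp j h0Icc, Rm]
                  apply srec_of_not_exists
                  rintro ⟨s, hs, hPs⟩
                  rw [le_antisymm hs.2 hs.1] at hPs
                  exact hc' hPs
                exact hv0 (by rw [← hyj, hz])
        have hY0 : limY y 0 = y (m+1) v := by
          apply le_antisymm
          · apply iSup_le
            intro j
            rcases le_total j (m+1) with h' | h'
            · exact le_trans (L_mono c h0Icc h') (le_of_eq (hup (m+1) (le_refl _)))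
            · exact le_of_eq (hup j h')
          · rw [← hup (m+1) (le_refl _)]
            exact le_limY (m+1)
        exact hW ⟨0, ⟨le_refl 0, le_trans hv.1 hv.2⟩, by rw [hY0]; exact hPv⟩
    by_cases hV : ∃ s ∈ Icc 0 t, (fun v => v ≤ (m : Sd)) (y (m+1) s)
    · have hνt : lastVisit (fun v => v ≤ (m : Sd)) (y (m+1)) t ≤ t := lastVisit_le hV
      have hν0 : 0 ≤ lastVisit (fun v => v ≤ (m : Sd)) (y (m+1)) t := lastVisit_nonneg hV
      set ν := lastVisit (fun v => v ≤ (m : Sd)) (y (m+1)) t with hν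
      by_cases hPν : y (m+1) ν ≤ (m : Sd)
      · rw [srec_of_visit (P := fun v => v ≤ (m : Sd)) hV hν.symm hPν, hα ν ⟨hν0, hνt⟩ hPν]
      · have hνpos : 0 < ν := by
          rcases lt_or_eq_of_le hν0 with h | h
          · exact h
          · exfalso
            obtain ⟨s, hs, hPs⟩ := hV
            have h1 : s ≤ ν := visit_le_lastVisit hs hPs
            have h2 : s = 0 := le_antisymm (by rw [h]; exact h1) hs.1
            rw [h2] at hPs
            rw [← h] at hPν
            exact hPν hPs
        have hνT : ν ≤ T := le_trans hνt ht.2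
        haveI := lf_neBot hνpos hνT
        obtain ⟨Λ, hΛle, hevΛ⟩ := L_lc c (m+1) ⟨hνpos, hνT⟩
        have hPν' : ¬ (fun v => v ≤ (m : Sd))
            (y (m+1) (lastVisit (fun v => v ≤ (m : Sd)) (y (m+1)) t)) := by
          rw [← hν]; exact hPν
        have hfs := freq_visit_lf (P := fun v => v ≤ (m : Sd)) (x := y (m+1)) hV ht.2 hPν'
        rw [← hν] at hfs
        obtain ⟨w, hw1, he, hmem, hmlt⟩ :=
          (hfs.and_eventually (hevΛ.and eventually_mem_lf)).exists
        have hwIcc : w ∈ Icc 0 t := ⟨hmem.1, le_trans (le_of_lt hmlt) hνt⟩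
        have hΛ0 : (Λ : Sd) = 0 := by rw [← he]; exact hα w hwIcc hw1
        rw [srec_of_cluster (P := fun v => v ≤ (m : Sd)) hV hν.symm hPν hνpos hνT
          (fun k => hevΛ.mono fun u hu => Or.inl hu) hevΛ.frequently, hΛ0]
    · rw [srec_of_not_exists (P := fun v => v ≤ (m : Sd)) hV]

end SoftProof

open Soft Filter Topology in
/-- If `y_m ∈ D([0,T], S_m)` satisfy `R_m y_{m+1} = y_m` for all `m`, then there exists
`y ∈ E([0,T], S_d)` with `R_m y = y_m` for all `m`; moreover `y` is the pointwise limit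
of the nondecreasing sequence `y_m`. -/
theorem stmt13 (T : ℝ) (hT : 0 < T) (y : ℕ → ℝ → Soft.Sd)
    (hmem : ∀ m, Soft.memD T m (y m))
    (hcomp : ∀ m, Set.EqOn (Soft.Rm T m (y (m + 1))) (y m) (Set.Icc 0 T)) :
    ∃ Y : ℝ → Soft.Sd, Soft.memE T Y ∧
      (∀ m, Set.EqOn (Soft.Rm T m Y) (y m) (Set.Icc 0 T)) ∧
      ∀ t ∈ Set.Icc 0 T, (Monotone fun m => y m t) ∧
        Filter.Tendsto (fun m => y m t) Filter.atTop (𝓝 (Y t)) := by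
  have c : SoftProof.Ctx T y := ⟨hT, hmem, hcomp⟩
  refine ⟨SoftProof.limY y, ⟨⟨fun t ht => SoftProof.L_right c ht,
      fun t ht => SoftProof.L_left c ht⟩, SoftProof.L_Y0 c,
      fun t ht htop => SoftProof.L_top_entry c ht htop⟩,
    fun m t ht => SoftProof.L_C c m ht, fun t ht =>
      ⟨SoftProof.L_mono c ht, tendsto_atTop_iSup (SoftProof.L_mono c ht)⟩⟩
end
end

section
/- On D([0,T], S_m) with the Skorohod metric, the number-of-visits functionals N_k (the number of maximal constancy intervals on which the trajectory equals k), 1 ≤ k ≤ m, are continuous, and for each j, ℓ and a > 0 the set {x : T_{j,ℓ}(x) ≥ a} is closed, where T_{j,ℓ}(x) denotes the length of the ℓ-th holding interval at state j (set to 0 if ℓ > N_j(x)). -/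
open Filter Topology Set

noncomputable section
namespace SoftAux
open Soft

lemma sval_mem (k : Sd) : sval k ∈ Set.Icc (0:ℝ) 1 := by
  unfold sval
  split
  · exact ⟨le_refl 0 |>.trans (le_refl 0), zero_le_one⟩
  · constructor
    · positivity
    · rw [div_le_one (by positivity)]
      have : (0:ℝ) ≤ (ENat.toNat k : ℝ) := by positivity
      linarith

lemma sdist_le_one (k j : Sd) : sdist k j ≤ 1 := by
  have hk := sval_mem k; have hj := sval_mem j
  rw [sdist, abs_le]
  constructor <;> [linarith [hk.1, hj.2]; linarith [hk.2, hj.1]]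

lemma sval_inj {m : ℕ} {k j : Sd} (hk : k ≤ (m : Sd)) (hj : j ≤ (m : Sd))
    (h : sdist k j < 1 / ((m : ℝ) + 1) ^ 2) : k = j := by
  have hktop : k ≠ ⊤ := ne_top_of_le_ne_top (WithTop.coe_ne_top (a := m)) hk
  have hjtop : j ≠ ⊤ := ne_top_of_le_ne_top (WithTop.coe_ne_top (a := m)) hj
  lift k to ℕ using hktop with k'
  lift j to ℕ using hjtop with j'
  have hk' : k' ≤ m := by exact_mod_cast hk
  have hj' : j' ≤ m := by exact_mod_cast hj
  by_contra hne
  have hne' : k' ≠ j' := by simpa using hne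
  have hA : sval (k' : Sd) = 1 / ((k' : ℝ) + 1) := by
    simp [sval]
  have hB : sval (j' : Sd) = 1 / ((j' : ℝ) + 1) := by
    simp [sval]
  rw [sdist, hA, hB] at h
  set A : ℝ := (k' : ℝ) + 1 with hAdef
  set B : ℝ := (j' : ℝ) + 1 with hBdef
  have hApos : 0 < A := by positivity
  have hBpos : 0 < B := by positivity
  have hAle : A ≤ (m : ℝ) + 1 := by simp [hAdef]; exact_mod_cast hk'
  have hBle : B ≤ (m : ℝ) + 1 := by simp [hBdef]; exact_mod_cast hj'
  have habs : (1:ℝ) ≤ |B - A| := by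
    rcases lt_or_gt_of_ne hne' with hlt | hlt
    · have : (k' : ℝ) + 1 ≤ (j' : ℝ) := by exact_mod_cast hlt
      rw [abs_of_nonneg (by simp [hAdef, hBdef]; linarith)]; simp [hAdef, hBdef]; linarith
    · have : (j' : ℝ) + 1 ≤ (k' : ℝ) := by exact_mod_cast hlt
      rw [abs_of_nonpos (by simp [hAdef, hBdef]; linarith)]; simp [hAdef, hBdef]; linarith
  have heq : |1 / A - 1 / B| = |B - A| / (A * B) := by
    rw [div_sub_div _ _ (ne_of_gt hApos) (ne_of_gt hBpos), abs_div,
      abs_of_pos (mul_pos hApos hBpos)]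
    ring_nf
  rw [heq] at h
  have : (1:ℝ) / ((m : ℝ) + 1)^2 ≤ |B - A| / (A * B) := by
    apply div_le_div₀ (abs_nonneg _) habs (by positivity)
    nlinarith
  linarith



lemma tc_map_sInf (hT : 0 ≤ T) (hl : TimeChange T l) {A : Set ℝ} (hA : A ⊆ Set.Icc 0 T) :
    l (sInf A) = sInf (l '' A) := by
  rcases A.eq_empty_or_nonempty with rfl | hne
  · simp [Real.sInf_empty, hl.1]
  have hbdd : BddBelow A := ⟨0, fun a ha => (hA ha).1⟩
  have hs0 : 0 ≤ sInf A := le_csInf hne fun b hb => (hA hb).1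
  have hsT : sInf A ≤ T := by
    obtain ⟨a, ha⟩ := hne
    exact (csInf_le hbdd ha).trans (hA ha).2
  have hsmem : sInf A ∈ Set.Icc 0 T := ⟨hs0, hsT⟩
  have hmono := hl.2.2.2.1.monotoneOn
  have hbdd' : BddBelow (l '' A) := ⟨0, by rintro b ⟨a, ha, rfl⟩; exact (hl.2.2.2.2 (hA ha)).1⟩
  apply le_antisymm
  · apply le_csInf (hne.image l)
    rintro b ⟨a, ha, rfl⟩
    exact hmono hsmem (hA ha) (csInf_le hbdd ha)
  · apply le_of_forall_pos_le_add
    intro ε hε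
    have hc : ContinuousWithinAt l (Set.Icc 0 T) (sInf A) := hl.2.2.1 _ hsmem
    rw [Metric.continuousWithinAt_iff] at hc
    obtain ⟨δ, hδ, hcd⟩ := hc ε hε
    obtain ⟨a, ha, halt⟩ := Real.lt_sInf_add_pos hne hδ
    have hdist : dist a (sInf A) < δ := by
      rw [Real.dist_eq, abs_of_nonneg (by linarith [csInf_le hbdd ha])]
      linarith
    have := hcd (hA ha) hdist
    rw [Real.dist_eq] at this
    have hla : l a ≤ l (sInf A) + ε := by
      cases' abs_lt.mp this with h1 h2; linarith
    exact (csInf_le hbdd' ⟨a, ha, rfl⟩).trans hla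


variable {T : ℝ} {l : ℝ → ℝ} {u x : ℝ → Sd} {j : Sd}

lemma tc_surj (hT : 0 ≤ T) (hl : TimeChange T l) :
    ∀ s' ∈ Set.Icc 0 T, ∃ s ∈ Set.Icc 0 T, l s = s' := by
  intro s' hs'
  have := intermediate_value_Icc hT hl.2.2.1
  rw [hl.1, hl.2.1] at this
  obtain ⟨s, hs, hls⟩ := this hs'
  exact ⟨s, hs, hls⟩

lemma entry_iff (hT : 0 ≤ T) (hl : TimeChange T l)
    (heq : Set.EqOn u (x ∘ l) (Set.Icc 0 T)) {t : ℝ} (ht : t ∈ Set.Icc 0 T) :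
    t ∈ entryPoints T j u ↔ l t ∈ entryPoints T j x := by
  have hmaps := hl.2.2.2.2
  have hsm := hl.2.2.2.1
  constructor
  · rintro ⟨-, hval, hc⟩
    have h' := heq ht
    simp only [Function.comp_apply] at h'
    refine ⟨hmaps ht, by rw [← h']; exact hval, ?_⟩
    rcases hc with rfl | hc
    · exact Or.inl hl.1
    right
    intro δ' hδ'
    have ht0 : 0 < t := by
      rcases lt_or_eq_of_le ht.1 with h | h
      · exact h
      · exfalso
        rcases hc δ' hδ' with ⟨s, ⟨hs1, hs2⟩, -⟩
        have := hs1.2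
        have := hs2.1
        linarith
    -- continuity of l at t within Icc
    have hc' : ContinuousWithinAt l (Set.Icc 0 T) t := hl.2.2.1 _ ht
    rw [Metric.continuousWithinAt_iff] at hc'
    obtain ⟨δ₁, hδ₁, hcd⟩ := hc' δ' hδ'
    obtain ⟨s, ⟨hs1, hs2⟩, hsne⟩ := hc δ₁ hδ₁
    refine ⟨l s, ⟨⟨?_, hsm hs2 ht hs1.2⟩, hmaps hs2⟩, ?_⟩
    · have : dist s t < δ₁ := by
        rw [Real.dist_eq, abs_of_nonpos (by linarith [hs1.2])]
        linarith [hs1.1]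
      have := hcd hs2 this
      rw [Real.dist_eq] at this
      cases' abs_lt.mp this with h1 h2
      linarith
    · rw [← Function.comp_apply (f := x) (g := l), ← heq hs2]; exact hsne
  · rintro ⟨-, hval, hc⟩
    refine ⟨ht, by rw [heq ht]; exact hval, ?_⟩
    rcases eq_or_lt_of_le ht.1 with rfl | ht0
    · exact Or.inl rfl
    right
    have hlt0 : l t ≠ 0 := by
      intro h
      have : l 0 = l t := by rw [hl.1, h]
      have := hsm.injOn (Set.left_mem_Icc.mpr hT) ht this
      exact absurd this.symm (ne_of_gt ht0)
    rcases hc with h | hc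
    · exact absurd h hlt0
    intro δ hδ
    set t₀ : ℝ := max (t - δ) 0 with ht₀def
    have ht₀mem : t₀ ∈ Set.Icc 0 T := ⟨le_max_right _ _, by
      rw [ht₀def]; exact max_le (by linarith [ht.2]) hT⟩
    have ht₀lt : t₀ < t := by
      apply max_lt (by linarith) ht0
    have hδ'pos : 0 < l t - l t₀ := sub_pos.mpr (hsm ht₀mem ht ht₀lt)
    obtain ⟨s', ⟨hs'1, hs'2⟩, hs'ne⟩ := hc _ hδ'pos
    obtain ⟨s, hsmem, rfl⟩ := tc_surj hT hl s' hs'2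
    have hst : s < t := (hsm.lt_iff_lt hsmem ht).mp hs'1.2
    have hst₀ : t₀ < s := by
      by_contra hcon
      have : l s ≤ l t₀ := hsm.monotoneOn hsmem ht₀mem (not_lt.mp hcon)
      linarith [hs'1.1]
    refine ⟨s, ⟨⟨by linarith [le_max_left (t - δ) 0], hst⟩, hsmem⟩, ?_⟩
    rw [heq hsmem]; exact hs'ne

lemma entry_image (hT : 0 ≤ T) (hl : TimeChange T l)
    (heq : Set.EqOn u (x ∘ l) (Set.Icc 0 T)) :
    l '' entryPoints T j u = entryPoints T j x := by
  ext e'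
  constructor
  · rintro ⟨e, he, rfl⟩
    exact (entry_iff hT hl heq he.1).mp he
  · intro he'
    obtain ⟨e, hemem, rfl⟩ := tc_surj hT hl e' he'.1
    exact ⟨e, (entry_iff hT hl heq hemem).mpr he', rfl⟩

lemma entry_injOn (hl : TimeChange T l) : Set.InjOn l (entryPoints T j u) :=
  hl.2.2.2.1.injOn.mono fun _ h => h.1

lemma nvisits_eq (hT : 0 ≤ T) (hl : TimeChange T l)
    (heq : Set.EqOn u (x ∘ l) (Set.Icc 0 T)) :
    Nvisits T j x = Nvisits T j u := by
  rw [Nvisits, Nvisits, ← entry_image hT hl heq, Set.ncard_image_of_injOn (entry_injOn hl)]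

lemma count_image (hT : 0 ≤ T) (hl : TimeChange T l)
    (heq : Set.EqOn u (x ∘ l) (Set.Icc 0 T)) {e : ℝ} (he : e ∈ Set.Icc 0 T) :
    l '' {s | s ∈ entryPoints T j u ∧ s < e} = {s | s ∈ entryPoints T j x ∧ s < l e} := by
  ext s'
  constructor
  · rintro ⟨s, ⟨hs1, hs2⟩, rfl⟩
    exact ⟨(entry_iff hT hl heq hs1.1).mp hs1, hl.2.2.2.1 hs1.1 he hs2⟩
  · rintro ⟨hs'1, hs'2⟩
    obtain ⟨s, hsmem, rfl⟩ := tc_surj hT hl s' hs'1.1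
    exact ⟨s, ⟨(entry_iff hT hl heq hsmem).mpr hs'1,
      (hl.2.2.2.1.lt_iff_lt hsmem he).mp hs'2⟩, rfl⟩

lemma nthEntry_image (hT : 0 ≤ T) (hl : TimeChange T l)
    (heq : Set.EqOn u (x ∘ l) (Set.Icc 0 T)) (k : ℕ) :
    l '' {e | e ∈ entryPoints T j u ∧ {s | s ∈ entryPoints T j u ∧ s < e}.ncard = k}
      = {e | e ∈ entryPoints T j x ∧ {s | s ∈ entryPoints T j x ∧ s < e}.ncard = k} := by
  ext e'
  constructor
  · rintro ⟨e, ⟨he1, he2⟩, rfl⟩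
    refine ⟨(entry_iff hT hl heq he1.1).mp he1, ?_⟩
    rw [← count_image hT hl heq he1.1,
      Set.ncard_image_of_injOn ((entry_injOn hl).mono fun _ h => h.1)]
    exact he2
  · rintro ⟨he'1, he'2⟩
    obtain ⟨e, hemem, rfl⟩ := tc_surj hT hl e' he'1.1
    refine ⟨e, ⟨(entry_iff hT hl heq hemem).mpr he'1, ?_⟩, rfl⟩
    rw [← count_image hT hl heq hemem,
      Set.ncard_image_of_injOn ((entry_injOn hl).mono fun _ h => h.1)] at he'2
    exact he'2

lemma exit_image (hT : 0 ≤ T) (hl : TimeChange T l)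
    (heq : Set.EqOn u (x ∘ l) (Set.Icc 0 T)) {t : ℝ} (ht : t ∈ Set.Icc 0 T) :
    l '' ({s | s ∈ Set.Ioc t T ∧ u s ≠ j} ∪ {T})
      = {s | s ∈ Set.Ioc (l t) T ∧ x s ≠ j} ∪ {T} := by
  have hTmem : T ∈ Set.Icc 0 T := Set.right_mem_Icc.mpr hT
  ext s'
  constructor
  · rintro ⟨s, hs, rfl⟩
    rcases hs with ⟨hs1, hs2⟩ | rfl
    · have hsmem : s ∈ Set.Icc 0 T := ⟨le_of_lt (lt_of_le_of_lt ht.1 hs1.1), hs1.2⟩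
      left
      refine ⟨⟨hl.2.2.2.1 ht hsmem hs1.1, (hl.2.2.2.2 hsmem).2⟩, ?_⟩
      rw [← Function.comp_apply (f := x) (g := l), ← heq hsmem]; exact hs2
    · right; simp [hl.2.1]
  · rintro (⟨hs'1, hs'2⟩ | hTs)
    · have hs'mem : s' ∈ Set.Icc 0 T := ⟨le_of_lt (lt_of_le_of_lt (hl.2.2.2.2 ht).1 hs'1.1), hs'1.2⟩
      obtain ⟨s, hsmem, rfl⟩ := tc_surj hT hl s' hs'mem
      refine ⟨s, Or.inl ⟨⟨(hl.2.2.2.1.lt_iff_lt ht hsmem).mp hs'1.1, hsmem.2⟩, ?_⟩, rfl⟩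
      rw [heq hsmem]; exact hs'2
    · rw [Set.mem_singleton_iff] at hTs
      rw [hTs]
      exact ⟨T, Or.inr rfl, hl.2.1⟩


lemma sInf_mem_Icc {T : ℝ} (hT : 0 ≤ T) {A : Set ℝ} (hA : A ⊆ Set.Icc 0 T) :
    sInf A ∈ Set.Icc 0 T := by
  rcases A.eq_empty_or_nonempty with rfl | hne
  · simp [Real.sInf_empty, hT]
  have hbdd : BddBelow A := ⟨0, fun a ha => (hA ha).1⟩
  exact ⟨le_csInf hne fun b hb => (hA hb).1,
    (csInf_le hbdd hne.choose_spec).trans (hA hne.choose_spec).2⟩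

lemma exists_tc {T : ℝ} (hT : 0 < T) {m : ℕ} {u x : ℝ → Sd}
    (hu : memD T m u) (hx : memD T m x) {ε : ℝ} (hε : 0 < ε)
    (hd : dS T u x < min ε (1 / ((m : ℝ) + 1) ^ 2)) :
    ∃ l, TimeChange T l ∧ Set.EqOn u (x ∘ l) (Set.Icc 0 T) ∧
      ∀ s ∈ Set.Icc 0 T, ∀ t ∈ Set.Icc 0 T, s < t →
        |Real.log ((l t - l s) / (t - s))| ≤ ε := by
  have hne : {a : ℝ | ∃ l, TimeChange T l ∧
      (∀ t ∈ Set.Icc 0 T, sdist (u t) (x (l t)) ≤ a) ∧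
      ∀ s ∈ Set.Icc 0 T, ∀ t ∈ Set.Icc 0 T, s < t →
        |Real.log ((l t - l s) / (t - s))| ≤ a}.Nonempty := by
    refine ⟨1, fun r => r, ⟨rfl, rfl, continuousOn_id, fun a _ b _ h => h, fun a ha => ha⟩,
      fun t _ => sdist_le_one _ _, fun s _ t _ hst => ?_⟩
    rw [div_self (ne_of_gt (sub_pos.mpr hst)), Real.log_one, abs_zero]
    exact zero_le_one
  obtain ⟨a, ⟨l, hltc, h1, h2⟩, halt⟩ := exists_lt_of_csInf_lt hne hd
  refine ⟨l, hltc, ?_, fun s hs t ht hst => (h2 s hs t ht hst).trans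
    (le_of_lt (lt_of_lt_of_le halt (min_le_left _ _)))⟩
  intro t htm
  exact sval_inj (hu.1 t htm) (hx.1 _ (hltc.2.2.2.2 htm))
    (lt_of_le_of_lt (h1 t htm) (lt_of_lt_of_le halt (min_le_right _ _)))

end SoftAux


open Soft Filter Topology in
/-- On `D([0,T], S_m)` with the Skorohod metric, the number-of-visits functionals `N_k`
are continuous, and the sets `{x : T_{j,l}(x) ≥ a}` (`a > 0`) are closed. -/
theorem stmt19 (T : ℝ) (hT : 0 < T) (m : ℕ) :
    (∀ k : ℕ, k ≤ m → ∀ (u : ℕ → ℝ → Soft.Sd) (x : ℝ → Soft.Sd),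
      (∀ n, Soft.memD T m (u n)) → Soft.memD T m x →
      Filter.Tendsto (fun n => Soft.dS T (u n) x) Filter.atTop (𝓝 0) →
      Filter.Tendsto (fun n => Soft.Nvisits T (k : Soft.Sd) (u n)) Filter.atTop
        (𝓝 (Soft.Nvisits T (k : Soft.Sd) x))) ∧
    (∀ j : ℕ, j ≤ m → ∀ l : ℕ, 1 ≤ l → ∀ a : ℝ, 0 < a →
      ∀ (u : ℕ → ℝ → Soft.Sd) (x : ℝ → Soft.Sd),
      (∀ n, Soft.memD T m (u n)) → Soft.memD T m x →
      Filter.Tendsto (fun n => Soft.dS T (u n) x) Filter.atTop (𝓝 0) →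
      (∀ n, a ≤ Soft.holdingTime T (j : Soft.Sd) (u n) l) →
      a ≤ Soft.holdingTime T (j : Soft.Sd) x l) := by
  constructor
  · intro k hk u x hu hx hconv
    have hδ : (0:ℝ) < min 1 (1 / ((m : ℝ) + 1) ^ 2) := lt_min one_pos (by positivity)
    have hev : ∀ᶠ n in atTop, dS T (u n) x < min 1 (1 / ((m : ℝ) + 1) ^ 2) :=
      hconv.eventually_lt_const hδ
    refine Filter.Tendsto.congr' ?_ tendsto_const_nhds
    filter_upwards [hev] with n hn
    obtain ⟨l, hltc, heq, -⟩ := SoftAux.exists_tc hT (hu n) hx one_pos hn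
    exact SoftAux.nvisits_eq hT.le hltc heq
  · intro j hj l' hl' a ha u x hu hx hconv hle
    have key : ∀ ε > (0:ℝ), a * Real.exp (-ε) ≤ holdingTime T (j : Sd) x l' := by
      intro ε hε
      have hδ : (0:ℝ) < min ε (1 / ((m : ℝ) + 1) ^ 2) := lt_min hε (by positivity)
      obtain ⟨n, hn⟩ := (hconv.eventually_lt_const hδ).exists
      obtain ⟨lam, hltc, heq, hlog⟩ := SoftAux.exists_tc hT (hu n) hx hε hn
      have hHu := hle n
      have hcond : 1 ≤ l' ∧ l' ≤ Nvisits T (j : Sd) (u n) := by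
        by_contra hc
        rw [holdingTime, if_neg hc] at hHu
        linarith
      set e := nthEntry T (j : Sd) (u n) (l' - 1) with hedef
      set f := exitTime T (j : Sd) (u n) e with hfdef
      rw [holdingTime, if_pos hcond, ← hedef, ← hfdef] at hHu
      have hef : e < f := by linarith
      have hAsub : {e | e ∈ entryPoints T (j : Sd) (u n) ∧
          {s | s ∈ entryPoints T (j : Sd) (u n) ∧ s < e}.ncard = l' - 1} ⊆ Set.Icc 0 T :=
        fun s hs => hs.1.1
      have hemem : e ∈ Set.Icc 0 T := SoftAux.sInf_mem_Icc hT.le hAsub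
      have hBsub : {s | s ∈ Set.Ioc e T ∧ u n s ≠ (j : Sd)} ∪ {T} ⊆ Set.Icc 0 T := by
        rintro s (⟨hs1, -⟩ | hs)
        · exact ⟨le_of_lt (lt_of_le_of_lt hemem.1 hs1.1), hs1.2⟩
        · rw [Set.mem_singleton_iff] at hs
          rw [hs]
          exact Set.right_mem_Icc.mpr hT.le
      have hfmem : f ∈ Set.Icc 0 T := SoftAux.sInf_mem_Icc hT.le hBsub
      have hent : nthEntry T (j : Sd) x (l' - 1) = lam e := by
        rw [nthEntry, ← SoftAux.nthEntry_image hT.le hltc heq (l' - 1),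
          ← SoftAux.tc_map_sInf hT.le hltc hAsub, hedef, nthEntry]
      have hexit : exitTime T (j : Sd) x (lam e) = lam f := by
        rw [exitTime, ← SoftAux.exit_image hT.le hltc heq hemem,
          ← SoftAux.tc_map_sInf hT.le hltc hBsub, hfdef, exitTime]
      have hcondx : 1 ≤ l' ∧ l' ≤ Nvisits T (j : Sd) x := by
        refine ⟨hcond.1, ?_⟩
        rw [SoftAux.nvisits_eq hT.le hltc heq]
        exact hcond.2
      have hH : holdingTime T (j : Sd) x l' = lam f - lam e := by
        rw [holdingTime, if_pos hcondx, hent, hexit]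
      have hml : lam e < lam f := hltc.2.2.2.1 hemem hfmem hef
      have hlog' := hlog e hemem f hfmem hef
      have hrpos : 0 < (lam f - lam e) / (f - e) :=
        div_pos (sub_pos.mpr hml) (sub_pos.mpr hef)
      have hr : Real.exp (-ε) ≤ (lam f - lam e) / (f - e) := by
        calc Real.exp (-ε) ≤ Real.exp (Real.log ((lam f - lam e) / (f - e))) :=
              Real.exp_le_exp.mpr (neg_le_of_abs_le hlog' |>.trans (le_refl _) |> fun h => h)
          _ = (lam f - lam e) / (f - e) := Real.exp_log hrpos
      rw [hH]
      calc a * Real.exp (-ε) ≤ (f - e) * ((lam f - lam e) / (f - e)) :=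
            mul_le_mul hHu hr (Real.exp_pos _).le (by linarith)
        _ = lam f - lam e := by
            rw [mul_comm]
            exact div_mul_cancel₀ _ (ne_of_gt (sub_pos.mpr hef))
    have htend : Tendsto (fun ε : ℝ => a * Real.exp (-ε)) (𝓝[>] 0) (𝓝 a) := by
      have hc : Tendsto (fun ε : ℝ => a * Real.exp (-ε)) (𝓝 0) (𝓝 (a * Real.exp (-0))) := by
        exact (continuous_const.mul (Real.continuous_exp.comp continuous_neg)).tendsto 0
      rw [neg_zero, Real.exp_zero, mul_one] at hc
      exact hc.mono_left nhdsWithin_le_nhds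
    exact le_of_tendsto htend (eventually_mem_nhdsWithin.mono fun ε hε => key ε hε)
end
end
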